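/- arXiv:1610.08159 — 3 statements merged into one kernel-verified Lean document; each statement's English description precedes it below -/
import Mathlib

section
/- If p(z) is a polynomial of degree n with no zeros in the open unit disk D(0,1), then for every R ≥ 1, max_{|z|=R} |p(z)| ≤ ((R^n + 1)/2) · max_{|z|=1} |p(z)|. -/
open Polynomial Metric Set Complex Filter intervalIntegral


noncomputable def polyMax (p : Polynomial ℂ) (r : ℝ) : ℝ :=
  ⨆ z : Metric.sphere (0 : ℂ) r, ‖p.eval (z : ℂ)‖

namespace AR



lemma sphere_ne (r : ℝ) (hr : 0 ≤ r) : Nonempty (Metric.sphere (0 : ℂ) r) :=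
  ⟨⟨(r : ℂ), mem_sphere_zero_iff_norm.mpr (by rw [Complex.norm_real, Real.norm_of_nonneg hr])⟩⟩

lemma bdd (p : Polynomial ℂ) (r : ℝ) :
    BddAbove (Set.range fun z : Metric.sphere (0 : ℂ) r => ‖p.eval (z : ℂ)‖) := by
  have h : (Set.range fun z : Metric.sphere (0 : ℂ) r => ‖p.eval (z : ℂ)‖)
      = (fun z : ℂ => ‖p.eval z‖) '' (Metric.sphere (0 : ℂ) r) := by
    ext x; simp [Set.mem_image]
  rw [h]
  exact (isCompact_sphere (0:ℂ) r).bddAbove_image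
    (Continuous.continuousOn (by continuity))

lemma le_polyMax (p : Polynomial ℂ) {r : ℝ} {z : ℂ} (hz : ‖z‖ = r) :
    ‖p.eval z‖ ≤ polyMax p r :=
  le_ciSup (bdd p r) (⟨z, mem_sphere_zero_iff_norm.mpr hz⟩ : Metric.sphere (0:ℂ) r)

lemma polyMax_le (p : Polynomial ℂ) {r C : ℝ} (hr : 0 ≤ r)
    (hC : ∀ z : ℂ, ‖z‖ = r → ‖p.eval z‖ ≤ C) : polyMax p r ≤ C := by
  haveI := sphere_ne r hr
  exact ciSup_le fun z => hC z (mem_sphere_zero_iff_norm.mp z.2)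

lemma polyMax_nonneg (p : Polynomial ℂ) {r : ℝ} (hr : 0 ≤ r) : 0 ≤ polyMax p r := by
  obtain ⟨z⟩ := sphere_ne r hr
  exact le_trans (norm_nonneg _) (le_polyMax p (mem_sphere_zero_iff_norm.mp z.2))

/-- `(reflect N f).eval y = y^N * f.eval y⁻¹` for `y ≠ 0`. -/
lemma eval_reflect (N : ℕ) (f : Polynomial ℂ) (hf : f.natDegree ≤ N) {y : ℂ} (hy : y ≠ 0) :
    (reflect N f).eval y = y ^ N * f.eval y⁻¹ := by
  letI : Invertible (y⁻¹ : ℂ) := invertibleOfNonzero (inv_ne_zero hy)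
  have h := eval₂_reflect_mul_pow (RingHom.id ℂ) (y⁻¹) N f hf
  rw [invOf_eq_inv, inv_inv] at h
  simp only [eval₂_eq_eval_map, Polynomial.map_id] at h
  rw [← h, mul_comm, mul_assoc, ← mul_pow, inv_mul_cancel₀ hy, one_pow, mul_one]

lemma conj_eval (p : Polynomial ℂ) (z : ℂ) :
    (starRingEnd ℂ) (p.eval z) = (p.map (starRingEnd ℂ)).eval ((starRingEnd ℂ) z) := by
  induction p using Polynomial.induction_on' with
  | add f g hf hg => rw [eval_add, map_add, hf, hg, Polynomial.map_add, eval_add]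
  | monomial k a => simp [map_monomial, eval_monomial, map_mul, map_pow]



noncomputable def crev (n : ℕ) (p : Polynomial ℂ) : Polynomial ℂ :=
  reflect n (p.map (starRingEnd ℂ))

lemma natDegree_crev_le (n : ℕ) (p : Polynomial ℂ) (hp : p.natDegree ≤ n) :
    (crev n p).natDegree ≤ n := by
  refine natDegree_le_iff_coeff_eq_zero.mpr fun k hk => ?_
  rw [crev, coeff_reflect, revAt_eq_self_of_lt hk, coeff_map,
    coeff_eq_zero_of_natDegree_lt (lt_of_le_of_lt hp hk), map_zero]

lemma crev_eval (n : ℕ) (p : Polynomial ℂ) (hp : p.natDegree ≤ n) {w : ℂ} (hw : w ≠ 0) :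
    (crev n p).eval w = w ^ n * (starRingEnd ℂ) (p.eval (((starRingEnd ℂ) w)⁻¹)) := by
  rw [crev, eval_reflect n _ (le_trans natDegree_map_le hp) hw,
    conj_eval p (((starRingEnd ℂ) w)⁻¹), map_inv₀, Complex.conj_conj]

lemma norm_crev (n : ℕ) (p : Polynomial ℂ) (hp : p.natDegree ≤ n) {w : ℂ} (hw : w ≠ 0) :
    ‖(crev n p).eval w‖ = ‖w‖ ^ n * ‖p.eval (((starRingEnd ℂ) w)⁻¹)‖ := by
  rw [crev_eval n p hp hw, norm_mul, norm_pow, RCLike.norm_conj]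

lemma inv_conj_of_norm_one {w : ℂ} (hw : ‖w‖ = 1) : ((starRingEnd ℂ) w)⁻¹ = w := by
  refine inv_eq_of_mul_eq_one_right ?_
  rw [Complex.conj_mul', hw]
  norm_num

lemma norm_crev_circle (n : ℕ) (p : Polynomial ℂ) (hp : p.natDegree ≤ n) {w : ℂ}
    (hw : ‖w‖ = 1) : ‖(crev n p).eval w‖ = ‖p.eval w‖ := by
  have hw0 : w ≠ 0 := by intro h; rw [h] at hw; simp at hw
  rw [norm_crev n p hp hw0, inv_conj_of_norm_one hw, hw, one_pow, one_mul]

lemma crev_eval_zero (n : ℕ) (p : Polynomial ℂ) :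
    (crev n p).eval 0 = (starRingEnd ℂ) (p.coeff n) := by
  rw [← coeff_zero_eq_eval_zero, crev, coeff_reflect, revAt_zero, coeff_map]

/-- Maximum modulus principle for polynomials on the closed unit disk. -/
lemma maxmod (f : Polynomial ℂ) {C : ℝ} (h : ∀ z : ℂ, ‖z‖ = 1 → ‖f.eval z‖ ≤ C)
    {z : ℂ} (hz : ‖z‖ ≤ 1) : ‖f.eval z‖ ≤ C := by
  have hd : DiffContOnCl ℂ (fun z => f.eval z) (ball (0:ℂ) 1) :=
    (f.differentiable).diffContOnCl
  refine Complex.norm_le_of_forall_mem_frontier_norm_le isBounded_ball hd ?_ ?_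
  · intro w hw
    rw [frontier_ball (0:ℂ) one_ne_zero] at hw
    exact h w (mem_sphere_zero_iff_norm.mp hw)
  · rw [closure_ball (0:ℂ) one_ne_zero]
    exact mem_closedBall_zero_iff.mpr hz

/-- Growth lemma: `‖f(z)‖ ≤ ‖z‖^m * polyMax f 1` for `‖z‖ ≥ 1`. -/
lemma growth (f : Polynomial ℂ) (m : ℕ) (hf : f.natDegree ≤ m) {z : ℂ} (hz : 1 ≤ ‖z‖) :
    ‖f.eval z‖ ≤ ‖z‖ ^ m * polyMax f 1 := by
  have hz0 : z ≠ 0 := by intro h; rw [h] at hz; simp at hz; linarith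
  have hinv : ‖z⁻¹‖ ≤ 1 := by
    rw [norm_inv]
    exact inv_le_one_of_one_le₀ hz
  have hb : ∀ u : ℂ, ‖u‖ = 1 → ‖(reflect m f).eval u‖ ≤ polyMax f 1 := by
    intro u hu
    have hu0 : u ≠ 0 := by intro h; rw [h] at hu; simp at hu
    rw [eval_reflect m f hf hu0, norm_mul, norm_pow, hu, one_pow, one_mul]
    exact le_polyMax f (by rw [norm_inv, hu, inv_one])
  have := maxmod (reflect m f) hb hinv
  rw [eval_reflect m f hf (inv_ne_zero hz0), inv_inv, norm_mul, norm_pow, norm_inv] at this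
  have hpow : (0:ℝ) < ‖z‖ ^ m := pow_pos (by linarith) m
  calc ‖f.eval z‖ = ‖z‖ ^ m * ((‖z‖⁻¹) ^ m * ‖f.eval z‖) := by
        rw [inv_pow, ← mul_assoc, mul_inv_cancel₀ (ne_of_gt hpow), one_mul]
      _ ≤ ‖z‖ ^ m * polyMax f 1 := by
        exact mul_le_mul_of_nonneg_left this (le_of_lt hpow)



lemma crev_def (n : ℕ) (p : Polynomial ℂ) : crev n p = reflect n (p.map (starRingEnd ℂ)) := rfl

lemma coeff_le (p : Polynomial ℂ) (n : ℕ) (hp : p.natDegree ≤ n) :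
    ‖p.coeff n‖ ≤ polyMax p 1 := by
  have h := maxmod (crev n p) (C := polyMax p 1)
    (fun w hw => by rw [norm_crev_circle n p hp hw]; exact le_polyMax p hw)
    (z := (0:ℂ)) (by simp)
  rwa [crev_eval_zero, RCLike.norm_conj] at h


lemma interior_le (f : Polynomial ℂ) (n : ℕ) (hf : f.natDegree ≤ n)
    (h0 : ∀ z : ℂ, ‖z‖ ≤ 1 → f.eval z ≠ 0) {u : ℂ} (hu : ‖u‖ ≤ 1) :
    ‖(crev n f).eval u‖ ≤ ‖f.eval u‖ := by
  set F : ℂ → ℂ := fun z => (crev n f).eval z / f.eval z with hF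
  have hd : DiffContOnCl ℂ F (ball (0:ℂ) 1) := by
    constructor
    · exact (((crev n f).differentiable).differentiableOn).div
        ((f.differentiable).differentiableOn)
        (fun z hz => h0 z (le_of_lt (mem_ball_zero_iff.mp hz)))
    · rw [closure_ball (0:ℂ) one_ne_zero]
      exact (((crev n f).continuous).continuousOn).div
        ((f.continuous).continuousOn)
        (fun z hz => h0 z (mem_closedBall_zero_iff.mp hz))
  have key : ‖F u‖ ≤ 1 := by
    refine Complex.norm_le_of_forall_mem_frontier_norm_le isBounded_ball hd ?_ ?_
    · intro w hw
      rw [frontier_ball (0:ℂ) one_ne_zero] at hw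
      have hw1 : ‖w‖ = 1 := mem_sphere_zero_iff_norm.mp hw
      have hfw : f.eval w ≠ 0 := h0 w (le_of_eq hw1)
      rw [hF]
      simp only [norm_div]
      rw [norm_crev_circle n f hf hw1, div_self (norm_ne_zero_iff.mpr hfw)]
    · rw [closure_ball (0:ℂ) one_ne_zero]
      exact mem_closedBall_zero_iff.mpr hu
  have hfu : f.eval u ≠ 0 := h0 u hu
  rw [hF] at key
  simp only [norm_div] at key
  rwa [div_le_one (norm_pos_iff.mpr hfu)] at key

lemma ext_le (p : Polynomial ℂ) (n : ℕ) (hdeg : p.natDegree ≤ n)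
    (hnz : ∀ z : ℂ, ‖z‖ < 1 → p.eval z ≠ 0) {z : ℂ} (hz : 1 ≤ ‖z‖) :
    ‖p.eval z‖ ≤ ‖(crev n p).eval z‖ := by
  have hz0 : z ≠ 0 := by intro h; rw [h] at hz; simp at hz; linarith
  set v : ℂ := ((starRingEnd ℂ) z)⁻¹ with hv
  have hv0 : v ≠ 0 := inv_ne_zero (by simpa using hz0)
  have hnv : ‖v‖ = ‖z‖⁻¹ := by rw [hv, norm_inv, RCLike.norm_conj]
  have hvle : ‖v‖ ≤ 1 := by rw [hnv]; exact inv_le_one_of_one_le₀ hz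
  have hcv : ((starRingEnd ℂ) v)⁻¹ = z := by
    rw [hv, map_inv₀, Complex.conj_conj, inv_inv]
  -- the scaled inequality
  have main : ∀ ρ : ℝ, 0 < ρ → ρ < 1 →
      ‖v‖ ^ n * ‖p.eval ((ρ:ℂ) * z)‖ ≤ ‖p.eval ((ρ:ℂ) * v)‖ := by
    intro ρ h0ρ h1ρ
    set f : Polynomial ℂ := p.comp (C (ρ:ℂ) * X) with hfdef
    have hfeval : ∀ w : ℂ, f.eval w = p.eval ((ρ:ℂ) * w) := by
      intro w; rw [hfdef, eval_comp, eval_mul, eval_C, eval_X]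
    have hfd : f.natDegree ≤ n := by
      refine le_trans natDegree_comp_le ?_
      have : (C (ρ:ℂ) * X).natDegree = 1 :=
        natDegree_C_mul_X _ (by exact_mod_cast ne_of_gt h0ρ)
      rw [this, mul_one]
      exact hdeg
    have hf0 : ∀ w : ℂ, ‖w‖ ≤ 1 → f.eval w ≠ 0 := by
      intro w hw
      rw [hfeval]
      refine hnz _ ?_
      rw [norm_mul, Complex.norm_real, Real.norm_of_nonneg (le_of_lt h0ρ)]
      nlinarith [norm_nonneg w]
    have h := interior_le f n hfd hf0 hvle
    rw [norm_crev n f hfd hv0, hfeval, hfeval, hcv] at h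
    exact h
  -- take the limit ρ → 1⁻
  have lim : ‖v‖ ^ n * ‖p.eval z‖ ≤ ‖p.eval v‖ := by
    have t1 : Tendsto (fun ρ : ℝ => ‖v‖ ^ n * ‖p.eval ((ρ:ℂ) * z)‖) (nhdsWithin 1 (Iio 1))
        (nhds (‖v‖ ^ n * ‖p.eval z‖)) := by
      have cz : Continuous fun ρ : ℝ => ((ρ:ℂ) * z) :=
        Complex.continuous_ofReal.mul continuous_const
      have c : Continuous (fun ρ : ℝ => ‖v‖ ^ n * ‖p.eval ((ρ:ℂ) * z)‖) :=
        continuous_const.mul ((p.continuous.comp cz).norm)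
      have := (c.tendsto 1).mono_left (nhdsWithin_le_nhds (s := Iio 1))
      simpa using this
    have t2 : Tendsto (fun ρ : ℝ => ‖p.eval ((ρ:ℂ) * v)‖) (nhdsWithin 1 (Iio 1))
        (nhds (‖p.eval v‖)) := by
      have cv : Continuous fun ρ : ℝ => ((ρ:ℂ) * v) :=
        Complex.continuous_ofReal.mul continuous_const
      have c : Continuous (fun ρ : ℝ => ‖p.eval ((ρ:ℂ) * v)‖) :=
        (p.continuous.comp cv).norm
      have := (c.tendsto 1).mono_left (nhdsWithin_le_nhds (s := Iio 1))
      simpa using this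
    refine le_of_tendsto_of_tendsto t1 t2 ?_
    have hmem : Ioo (0:ℝ) 1 ∈ nhdsWithin (1:ℝ) (Iio 1) :=
      Ioo_mem_nhdsLT_of_mem (by constructor <;> norm_num)
    filter_upwards [hmem] with ρ hρ
    exact main ρ hρ.1 hρ.2
  rw [norm_crev n p hdeg hz0]
  calc ‖p.eval z‖ = ‖z‖ ^ n * (‖v‖ ^ n * ‖p.eval z‖) := by
        rw [← mul_assoc, ← mul_pow, hnv, mul_inv_cancel₀ (by positivity), one_pow, one_mul]
      _ ≤ ‖z‖ ^ n * ‖p.eval v‖ := by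
        refine mul_le_mul_of_nonneg_left lim (by positivity)



lemma re_inv_of_unit {u : ℂ} (hu : ‖u‖ = 1) (hu1 : u ≠ 1) : ((u - 1)⁻¹).re = -(1/2) := by
  have hns : Complex.normSq u = 1 := by
    rw [← Complex.sq_norm, hu, one_pow]
  have hre : u.re ≠ 1 := by
    intro h
    apply hu1
    have him : u.im = 0 := by
      have := Complex.normSq_apply u
      nlinarith [this, hns]
    exact Complex.ext h him
  rw [Complex.inv_re]
  have h1 : (u - 1).re = u.re - 1 := by simp
  have h2 : Complex.normSq (u - 1) = 2 - 2 * u.re := by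
    rw [Complex.normSq_apply] at hns ⊢
    simp only [Complex.sub_re, Complex.sub_im, Complex.one_re, Complex.one_im, sub_zero]
    nlinarith
  rw [h1, h2]
  have : (2 : ℝ) - 2 * u.re ≠ 0 := by intro h; apply hre; linarith
  field_simp
  ring

lemma re_frac_gt_half {z r : ℂ} (hz : ‖z‖ = 1) (hr : ‖r‖ < 1) : 1/2 < (z / (z - r)).re := by
  have hnsz : Complex.normSq z = 1 := by
    rw [← Complex.sq_norm, hz, one_pow]
  have hnsr : Complex.normSq r < 1 := by
    rw [← Complex.sq_norm]
    nlinarith [norm_nonneg r, hr]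
  have hzr : z - r ≠ 0 := by
    intro h
    rw [sub_eq_zero] at h
    rw [h] at hz
    exact absurd hz (ne_of_lt hr)
  have hpos : 0 < Complex.normSq (z - r) := Complex.normSq_pos.mpr hzr
  rw [Complex.div_re, ← add_div, lt_div_iff₀ hpos]
  rw [Complex.normSq_apply] at hnsz hnsr hpos ⊢
  simp only [Complex.sub_re, Complex.sub_im] at *
  nlinarith

lemma sum_re_pos : ∀ (t : Multiset ℂ), t ≠ 0 → (∀ x ∈ t, 0 < x.re) → 0 < t.sum.re := by
  refine Multiset.induction (by simp) ?_
  intro a t ih _ h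
  rw [Multiset.sum_cons, Complex.add_re]
  rcases eq_or_ne t 0 with rfl | ht
  · simpa using h a (Multiset.mem_cons_self a 0)
  · have h1 := h a (Multiset.mem_cons_self a t)
    have h2 := ih ht (fun x hx => h x (Multiset.mem_cons_of_mem hx))
    linarith

lemma deriv_prod_sum (z α : ℂ) : ∀ (s : Multiset ℂ), (∀ r ∈ s, z - r ≠ 0) →
    ((s.card : ℂ) * (((s.map (fun r => X - C r)).prod).eval z) +
      (α - z) * ((((s.map (fun r => X - C r)).prod).derivative).eval z)
    = (((s.map (fun r => X - C r)).prod).eval z) *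
        (s.map (fun r => (α - r) / (z - r))).sum) := by
  refine Multiset.induction (by simp) ?_
  intro r s ih h
  have hr : z - r ≠ 0 := h r (Multiset.mem_cons_self r s)
  have ihs := ih (fun x hx => h x (Multiset.mem_cons_of_mem hx))
  simp only [Multiset.map_cons, Multiset.prod_cons, Multiset.sum_cons, Multiset.card_cons,
    derivative_mul, derivative_sub, derivative_X, derivative_C, sub_zero, one_mul,
    eval_mul, eval_add, eval_sub, eval_X, eval_C, Nat.cast_add, Nat.cast_one]
  have e3 : (z - r) * (z - r)⁻¹ = 1 := mul_inv_cancel₀ hr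
  linear_combination (z - r) * ihs -
    (((s.map (fun r => X - C r)).prod).eval z) * (α - r) * e3

lemma polar_ne_zero (s : Multiset ℂ) (hs0 : s ≠ 0) (hs : ∀ r ∈ s, ‖r‖ < 1)
    {z α : ℂ} (hz : ‖z‖ = 1) (hα : ‖α‖ = 1) :
    (s.card : ℂ) * (((s.map (fun r => X - C r)).prod).eval z) +
      (α - z) * ((((s.map (fun r => X - C r)).prod).derivative).eval z) ≠ 0 := by
  have hzr : ∀ r ∈ s, z - r ≠ 0 := by
    intro r hrmem h
    rw [sub_eq_zero] at h
    rw [h] at hz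
    exact absurd hz (ne_of_lt (hs r hrmem))
  have hz0 : z ≠ 0 := by intro h; rw [h] at hz; simp at hz
  have hP : (((s.map (fun r => X - C r)).prod).eval z) ≠ 0 := by
    rw [eval_multiset_prod]
    refine Multiset.prod_ne_zero ?_
    intro h0
    rw [Multiset.mem_map] at h0
    obtain ⟨q, hq, hq0⟩ := h0
    rw [Multiset.mem_map] at hq
    obtain ⟨r, hrmem, rfl⟩ := hq
    rw [eval_sub, eval_X, eval_C] at hq0
    exact hzr r hrmem hq0
  rw [deriv_prod_sum z α s hzr]
  refine mul_ne_zero hP ?_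
  rcases eq_or_ne α z with rfl | hne
  · -- sum = card
    have : (s.map (fun r => (α - r) / (α - r))).sum = (s.card : ℂ) := by
      rw [Multiset.map_congr rfl (fun r hrmem => div_self (by
        have := hzr r hrmem; exact this))]
      simp [Multiset.map_const']
    rw [this]
    intro h
    apply hs0
    have : s.card = 0 := by exact_mod_cast h
    exact Multiset.card_eq_zero.mp this
  · obtain ⟨β, hβ⟩ : ∃ β : ℂ, β = α / z - 1 := ⟨_, rfl⟩
    have hu : ‖α / z‖ = 1 := by rw [norm_div, hα, hz, div_one]
    have hu1 : α / z ≠ 1 := by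
      intro h
      apply hne
      field_simp at h
      exact h
    have hβ0 : β ≠ 0 := by
      rw [hβ, sub_ne_zero]
      exact hu1
    intro hsum
    -- consider (sum) * β⁻¹, and show its real part is positive
    have hkey : 0 < ((s.map (fun r => (α - r) / (z - r) * β⁻¹)).sum).re := by
      refine sum_re_pos _ (by simpa using hs0) ?_
      intro x hx
      rw [Multiset.mem_map] at hx
      obtain ⟨r, hrmem, rfl⟩ := hx
      have hzrne := hzr r hrmem
      have e1 : (α - r) = (z - r) + β * z := by
        rw [hβ]
        linear_combination -(div_mul_cancel₀ α hz0)
      have e2 : β * β⁻¹ = 1 := mul_inv_cancel₀ hβ0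
      have e3 : (z - r) * (z - r)⁻¹ = 1 := mul_inv_cancel₀ hzrne
      have hid : (α - r) / (z - r) * β⁻¹ = β⁻¹ + z / (z - r) := by
        linear_combination ((z - r)⁻¹ * β⁻¹) * e1 + β⁻¹ * e3 + (z * (z - r)⁻¹) * e2
      rw [hid, Complex.add_re]
      have h1 : (β⁻¹).re = -(1/2) := by
        rw [hβ]
        exact re_inv_of_unit hu hu1
      have h2 := re_frac_gt_half hz (hs r hrmem)
      rw [h1]
      linarith
    rw [Multiset.sum_map_mul_right, hsum, zero_mul] at hkey
    simp at hkey




lemma polar_bound (p : Polynomial ℂ) (n : ℕ) (hn : 1 ≤ n) (hdeg : p.natDegree = n)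
    (hM : 0 < polyMax p 1) {z α : ℂ} (hz : ‖z‖ = 1) (hα : ‖α‖ = 1) :
    ‖(n:ℂ) * p.eval z + (α - z) * (p.derivative.eval z)‖ ≤ n * polyMax p 1 := by
  by_contra hcon
  push_neg at hcon
  obtain ⟨M, hMdef⟩ : ∃ M : ℝ, M = polyMax p 1 := ⟨_, rfl⟩
  rw [← hMdef] at hcon hM
  obtain ⟨D, hD⟩ : ∃ D : ℂ, D = (n:ℂ) * p.eval z + (α - z) * (p.derivative.eval z) := ⟨_, rfl⟩
  rw [← hD] at hcon
  have hz0 : z ≠ 0 := by intro h; rw [h] at hz; simp at hz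
  have hα0 : α ≠ 0 := by intro h; rw [h] at hα; simp at hα
  have hn0 : (n:ℂ) ≠ 0 := by
    simp only [ne_eq, Nat.cast_eq_zero]
    omega
  obtain ⟨c, hc⟩ : ∃ c : ℂ, c = (n:ℂ) * (M:ℂ) * α * z ^ (n-1) := ⟨_, rfl⟩
  have hM0 : (M:ℂ) ≠ 0 := by exact_mod_cast ne_of_gt hM
  have hc0 : c ≠ 0 := by
    rw [hc]
    exact mul_ne_zero (mul_ne_zero (mul_ne_zero hn0 hM0) hα0) (pow_ne_zero _ hz0)
  have hcnorm : ‖c‖ = n * M := by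
    rw [hc, norm_mul, norm_mul, norm_mul, norm_pow, hz, hα, one_pow, mul_one, mul_one,
      Complex.norm_natCast, Complex.norm_real, Real.norm_of_nonneg (le_of_lt hM)]
  obtain ⟨lam, hlam⟩ : ∃ lam : ℂ, lam = D / c := ⟨_, rfl⟩
  have hlam1 : 1 < ‖lam‖ := by
    rw [hlam, norm_div, hcnorm, lt_div_iff₀ (by positivity)]
    simpa using hcon
  obtain ⟨G, hG⟩ : ∃ G : Polynomial ℂ, G = p - C (lam * (M:ℂ)) * X ^ n := ⟨_, rfl⟩
  have hGcoeffn : G.coeff n = p.coeff n - lam * (M:ℂ) := by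
    rw [hG, coeff_sub, coeff_C_mul, coeff_X_pow, if_pos rfl, mul_one]
  have hGn0 : G.coeff n ≠ 0 := by
    rw [hGcoeffn, sub_ne_zero]
    intro h
    have h1 : ‖p.coeff n‖ ≤ M := hMdef ▸ coeff_le p n (le_of_eq hdeg)
    have h2 : ‖lam * (M:ℂ)‖ = ‖lam‖ * M := by
      rw [norm_mul, Complex.norm_real, Real.norm_of_nonneg (le_of_lt hM)]
    rw [h, h2] at h1
    nlinarith
  have hGdeg_le : G.natDegree ≤ n := by
    rw [hG]
    exact le_trans (natDegree_sub_le _ _)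
      (max_le (le_of_eq hdeg) (natDegree_C_mul_X_pow_le _ _))
  have hGdeg : G.natDegree = n := le_antisymm hGdeg_le (le_natDegree_of_ne_zero hGn0)
  have hG0 : G ≠ 0 := fun h => hGn0 (by simp [h])
  have hcard : Multiset.card G.roots = n := by
    have h1 := (IsAlgClosed.splits G).natDegree_eq_card_roots
    rw [← h1, hGdeg]
  have hroots : ∀ r ∈ G.roots, ‖r‖ < 1 := by
    intro r hr
    by_contra hge
    push_neg at hge
    have hev : G.eval r = 0 := isRoot_of_mem_roots hr
    rw [hG] at hev
    simp only [eval_sub, eval_mul, eval_C, eval_pow, eval_X] at hev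
    have hpr : p.eval r = lam * (M:ℂ) * r ^ n := sub_eq_zero.mp hev
    have hgr : ‖p.eval r‖ ≤ ‖r‖ ^ n * M := hMdef ▸ growth p n (le_of_eq hdeg) hge
    rw [hpr, norm_mul, norm_mul, norm_pow, Complex.norm_real,
      Real.norm_of_nonneg (le_of_lt hM)] at hgr
    have hpow : (1:ℝ) ≤ ‖r‖ ^ n := one_le_pow₀ hge
    nlinarith [mul_pos hM (lt_of_lt_of_le zero_lt_one hpow), hlam1]
  have hs0 : G.roots ≠ 0 := by
    intro h
    rw [h] at hcard
    simp at hcard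
    omega
  have hlc : G.leadingCoeff ≠ 0 := leadingCoeff_ne_zero.mpr hG0
  have hprod := (IsAlgClosed.splits G).eq_prod_roots
  have hEne := polar_ne_zero G.roots hs0 hroots hz hα
  have hEG : (n:ℂ) * G.eval z + (α - z) * ((derivative G).eval z) ≠ 0 := by
    have e1 : G.eval z = G.leadingCoeff * ((G.roots.map (fun r => X - C r)).prod).eval z := by
      conv_lhs => rw [hprod]
      rw [eval_mul, eval_C]
    have e2 : (derivative G).eval z
        = G.leadingCoeff * (((G.roots.map (fun r => X - C r)).prod).derivative).eval z := by
      conv_lhs => rw [hprod]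
      rw [derivative_C_mul, eval_mul, eval_C]
    rw [e1, e2, ← hcard]
    intro h
    apply mul_ne_zero hlc hEne
    linear_combination h
  apply hEG
  have hzn : z ^ n = z ^ (n-1) * z := by rw [← pow_succ, Nat.sub_add_cancel hn]
  have hGev : G.eval z = p.eval z - lam * (M:ℂ) * z ^ n := by
    rw [hG]; simp
  have hGdev : (derivative G).eval z
      = p.derivative.eval z - lam * (M:ℂ) * ((n:ℂ) * z ^ (n-1)) := by
    rw [hG, derivative_sub, derivative_C_mul, derivative_X_pow]
    simp only [eval_sub, eval_mul, eval_C, eval_pow, eval_X, eval_natCast]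
  have hDc : lam * c = D := by rw [hlam]; exact div_mul_cancel₀ D hc0
  have hkey : (n:ℂ) * (p.eval z) + (α - z) * (p.derivative.eval z)
      = lam * ((n:ℂ) * (M:ℂ) * α * z ^ (n-1)) := by rw [← hc, hDc, hD]
  rw [hGev, hGdev]
  linear_combination hkey + (-(n:ℂ) * lam * (M:ℂ)) * hzn


lemma exists_unimodular (a : ℂ) : ∃ μ : ℂ, ‖μ‖ = 1 ∧ μ * a = ((‖a‖ : ℝ) : ℂ) := by
  rcases eq_or_ne a 0 with rfl | ha
  · exact ⟨1, by simp, by simp⟩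
  · refine ⟨((‖a‖ : ℝ) : ℂ) / a, ?_, ?_⟩
    · rw [norm_div, Complex.norm_real, Real.norm_of_nonneg (norm_nonneg a),
        div_self (norm_ne_zero_iff.mpr ha)]
    · exact div_mul_cancel₀ _ ha

lemma align (p : Polynomial ℂ) (n : ℕ) (hn : 1 ≤ n) (hdeg : p.natDegree = n)
    (hM : 0 < polyMax p 1) {u : ℂ} (hu : ‖u‖ = 1) :
    ‖(derivative p).eval u‖ + ‖(n:ℂ) * p.eval u - u * (derivative p).eval u‖
      ≤ n * polyMax p 1 := by
  have hu0 : u ≠ 0 := by intro h; rw [h] at hu; simp at hu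
  obtain ⟨A, hA⟩ : ∃ A : ℂ, A = u * (derivative p).eval u := ⟨_, rfl⟩
  obtain ⟨B, hB⟩ : ∃ B : ℂ, B = (n:ℂ) * p.eval u - u * (derivative p).eval u := ⟨_, rfl⟩
  have hnA : ‖A‖ = ‖(derivative p).eval u‖ := by rw [hA, norm_mul, hu, one_mul]
  obtain ⟨μ, hμ, hμA⟩ := exists_unimodular A
  obtain ⟨ν, hν, hνB⟩ := exists_unimodular B
  have hν0 : ν ≠ 0 := by intro h; rw [h] at hν; simp at hν
  have hμ0 : μ ≠ 0 := by intro h; rw [h] at hμ; simp at hμ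
  obtain ⟨lam, hlamdef⟩ : ∃ lam : ℂ, lam = μ * ν⁻¹ := ⟨_, rfl⟩
  have hlam1 : ‖lam‖ = 1 := by rw [hlamdef, norm_mul, norm_inv, hμ, hν]; norm_num
  have hval : ‖lam * A + B‖ = ‖A‖ + ‖B‖ := by
    have h1 : lam * A + B = ν⁻¹ * (μ * A + ν * B) := by
      rw [hlamdef]
      field_simp
    rw [h1, norm_mul, norm_inv, hν, inv_one, one_mul, hμA, hνB, ← Complex.ofReal_add,
      Complex.norm_real, Real.norm_of_nonneg (by positivity)]
  have hpb := polar_bound p n hn hdeg hM hu (α := lam * u)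
    (by rw [norm_mul, hlam1, hu, one_mul])
  have hexpr : (n:ℂ) * p.eval u + (lam * u - u) * ((derivative p).eval u) = lam * A + B := by
    rw [hA, hB]; ring
  rw [hexpr, hval, hnA, hB] at hpb
  exact hpb

lemma crev_deriv_eval (p : Polynomial ℂ) (n : ℕ) (hn : 1 ≤ n) (hdeg : p.natDegree ≤ n)
    {u : ℂ} (hu : ‖u‖ = 1) :
    (derivative (crev n p)).eval u
      = u ^ (n-1) * (starRingEnd ℂ) ((n:ℂ) * p.eval u - u * (derivative p).eval u) := by
  have hu0 : u ≠ 0 := by intro h; rw [h] at hu; simp at hu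
  have hcu : (starRingEnd ℂ) u = u⁻¹ := by
    refine eq_inv_of_mul_eq_one_left ?_
    rw [Complex.conj_mul', hu]
    norm_num
  set pb : Polynomial ℂ := p.map (starRingEnd ℂ) with hpb
  have hdegpb : pb.natDegree ≤ n := le_trans natDegree_map_le hdeg
  -- derivative of w ↦ w^n * pb(w⁻¹) at u
  have h1 : HasDerivAt (fun w : ℂ => w ^ n) ((n:ℂ) * u ^ (n-1)) u := hasDerivAt_pow n u
  have h2 : HasDerivAt (fun w : ℂ => pb.eval w⁻¹)
      ((derivative pb).eval u⁻¹ * (-(u ^ 2)⁻¹)) u :=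
    HasDerivAt.comp u (pb.hasDerivAt u⁻¹) (hasDerivAt_inv hu0)
  have h3 : HasDerivAt (fun w : ℂ => w ^ n * pb.eval w⁻¹)
      ((n:ℂ) * u ^ (n-1) * pb.eval u⁻¹ + u ^ n * ((derivative pb).eval u⁻¹ * (-(u ^ 2)⁻¹)))
      u := h1.mul h2
  have heq : (fun w : ℂ => (crev n p).eval w) =ᶠ[nhds u] (fun w : ℂ => w ^ n * pb.eval w⁻¹) := by
    filter_upwards [IsOpen.mem_nhds isOpen_compl_singleton hu0] with w hw
    rw [crev_def, ← hpb, eval_reflect n pb hdegpb hw]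
  have h4 : HasDerivAt (fun w : ℂ => (crev n p).eval w)
      ((n:ℂ) * u ^ (n-1) * pb.eval u⁻¹ + u ^ n * ((derivative pb).eval u⁻¹ * (-(u ^ 2)⁻¹)))
      u := h3.congr_of_eventuallyEq heq
  have h5 := ((crev n p).hasDerivAt u).unique h4
  rw [h5]
  -- now rewrite in terms of conjugates
  have e1 : pb.eval u⁻¹ = (starRingEnd ℂ) (p.eval u) := by
    rw [← hcu, ← conj_eval]
  have e2 : (derivative pb).eval u⁻¹ = (starRingEnd ℂ) ((derivative p).eval u) := by
    rw [hpb, derivative_map, conj_eval (derivative p) u, hcu]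
  rw [e1, e2, map_sub, map_mul, map_mul]
  have hun : u ^ n = u ^ (n-1) * u := by rw [← pow_succ, Nat.sub_add_cancel hn]
  have hcn : (starRingEnd ℂ) ((n:ℂ)) = (n:ℂ) := by simp
  rw [hcn, hcu, hun]
  have e0 : u * u⁻¹ = 1 := mul_inv_cancel₀ hu0
  linear_combination (-(u ^ (n-1) * (starRingEnd ℂ) ((derivative p).eval u) * u⁻¹)) * e0

lemma crev_deriv_norm (p : Polynomial ℂ) (n : ℕ) (hn : 1 ≤ n) (hdeg : p.natDegree ≤ n)
    {u : ℂ} (hu : ‖u‖ = 1) :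
    ‖(derivative (crev n p)).eval u‖
      = ‖(n:ℂ) * p.eval u - u * (derivative p).eval u‖ := by
  rw [crev_deriv_eval p n hn hdeg hu, norm_mul, norm_pow, hu, one_pow, one_mul,
    RCLike.norm_conj]

lemma deriv_sum_bound (p : Polynomial ℂ) (n : ℕ) (hn : 1 ≤ n) (hdeg : p.natDegree = n)
    (hM : 0 < polyMax p 1) {w : ℂ} (hw : 1 ≤ ‖w‖) :
    ‖(derivative p).eval w‖ + ‖(derivative (crev n p)).eval w‖
      ≤ (n * polyMax p 1) * ‖w‖ ^ (n-1) := by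
  obtain ⟨μ, hμ, hμA⟩ := exists_unimodular ((derivative p).eval w)
  obtain ⟨ν, hν, hνB⟩ := exists_unimodular ((derivative (crev n p)).eval w)
  set h : Polynomial ℂ := C μ * derivative p + C ν * derivative (crev n p) with hh
  have hdegh : h.natDegree ≤ n - 1 := by
    refine le_trans (natDegree_add_le _ _) (max_le ?_ ?_)
    · exact le_trans (natDegree_C_mul_le _ _)
        (le_trans (natDegree_derivative_le p) (by omega))
    · exact le_trans (natDegree_C_mul_le _ _)
        (le_trans (natDegree_derivative_le _)
          (Nat.sub_le_sub_right (natDegree_crev_le n p (le_of_eq hdeg)) 1))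
  have hPM : polyMax h 1 ≤ n * polyMax p 1 := by
    refine polyMax_le h (by norm_num) ?_
    intro u hu
    rw [hh]
    simp only [eval_add, eval_mul, eval_C]
    calc ‖μ * (derivative p).eval u + ν * (derivative (crev n p)).eval u‖
        ≤ ‖μ * (derivative p).eval u‖ + ‖ν * (derivative (crev n p)).eval u‖ :=
          norm_add_le _ _
      _ = ‖(derivative p).eval u‖ + ‖(derivative (crev n p)).eval u‖ := by
          rw [norm_mul, norm_mul, hμ, hν, one_mul, one_mul]
      _ = ‖(derivative p).eval u‖ + ‖(n:ℂ) * p.eval u - u * (derivative p).eval u‖ := by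
          rw [crev_deriv_norm p n hn (le_of_eq hdeg) hu]
      _ ≤ n * polyMax p 1 := align p n hn hdeg hM hu
  have hevalh : ‖h.eval w‖ = ‖(derivative p).eval w‖ + ‖(derivative (crev n p)).eval w‖ := by
    rw [hh]
    simp only [eval_add, eval_mul, eval_C]
    rw [hμA, hνB, ← Complex.ofReal_add, Complex.norm_real,
      Real.norm_of_nonneg (by positivity)]
  calc ‖(derivative p).eval w‖ + ‖(derivative (crev n p)).eval w‖
       = ‖h.eval w‖ := hevalh.symm
    _ ≤ ‖w‖ ^ (n-1) * polyMax h 1 := growth h (n-1) hdegh hw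
    _ ≤ ‖w‖ ^ (n-1) * (n * polyMax p 1) := by
        refine mul_le_mul_of_nonneg_left hPM (by positivity)
    _ = (n * polyMax p 1) * ‖w‖ ^ (n-1) := by ring



lemma Mpos (p : Polynomial ℂ) (hnz : ∀ z : ℂ, ‖z‖ < 1 → p.eval z ≠ 0) :
    0 < polyMax p 1 := by
  have h0 : ‖p.eval 0‖ ≤ polyMax p 1 :=
    maxmod p (fun w hw => le_polyMax p hw) (by simp)
  have := hnz 0 (by simp)
  have : 0 < ‖p.eval 0‖ := norm_pos_iff.mpr this
  linarith

lemma hasDerivAt_eval_line (f : Polynomial ℂ) (z0 : ℂ) (t : ℝ) :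
    HasDerivAt (fun s : ℝ => f.eval ((s:ℂ) * z0))
      (z0 * (derivative f).eval ((t:ℂ) * z0)) t := by
  have h1 : HasDerivAt (fun w : ℂ => f.eval (w * z0))
      ((derivative f).eval ((t:ℂ) * z0) * z0) (t:ℝ) := by
    have hc : HasDerivAt (fun w : ℂ => w * z0) z0 ((t:ℝ):ℂ) := by
      simpa using (hasDerivAt_id ((t:ℝ):ℂ)).mul_const z0
    have := HasDerivAt.comp ((t:ℝ):ℂ) (f.hasDerivAt (((t:ℝ):ℂ) * z0)) hc
    exact this
  have := h1.comp_ofReal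
  simpa [mul_comm] using this

lemma sum_bound_R (p : Polynomial ℂ) (n : ℕ) (hn : 1 ≤ n) (hdeg : p.natDegree = n)
    (hM : 0 < polyMax p 1) {z0 : ℂ} (hz0 : ‖z0‖ = 1) {R : ℝ} (hR : 1 ≤ R) :
    ‖p.eval ((R:ℂ) * z0)‖ + ‖(crev n p).eval ((R:ℂ) * z0)‖
      ≤ (R ^ n + 1) * polyMax p 1 := by
  have hnorm_t : ∀ t : ℝ, 1 ≤ t → ‖(t:ℂ) * z0‖ = t := by
    intro t ht
    rw [norm_mul, hz0, mul_one, Complex.norm_real, Real.norm_of_nonneg (by linarith)]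
  have hcont : ∀ f : Polynomial ℂ, Continuous fun t : ℝ => ‖(derivative f).eval ((t:ℂ) * z0)‖ :=
    fun f => ((f.derivative.continuous).comp
      (Complex.continuous_ofReal.mul continuous_const)).norm
  -- FTC for p and for crev n p
  have ftc : ∀ f : Polynomial ℂ,
      ‖f.eval ((R:ℂ) * z0)‖ ≤ ‖f.eval z0‖ +
        ∫ t in (1:ℝ)..R, ‖(derivative f).eval ((t:ℂ) * z0)‖ := by
    intro f
    have hderiv : ∀ t ∈ uIcc (1:ℝ) R, HasDerivAt (fun s : ℝ => f.eval ((s:ℂ) * z0))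
        (z0 * (derivative f).eval ((t:ℂ) * z0)) t :=
      fun t _ => hasDerivAt_eval_line f z0 t
    have hint : IntervalIntegrable (fun t : ℝ => z0 * (derivative f).eval ((t:ℂ) * z0))
        MeasureTheory.volume 1 R :=
      (continuous_const.mul ((f.derivative.continuous).comp
        (Complex.continuous_ofReal.mul continuous_const))).intervalIntegrable _ _
    have heq := integral_eq_sub_of_hasDerivAt hderiv hint
    have h1 : f.eval ((R:ℂ) * z0) = f.eval z0 +
        ∫ t in (1:ℝ)..R, z0 * (derivative f).eval ((t:ℂ) * z0) := by
      rw [heq]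
      simp
    calc ‖f.eval ((R:ℂ) * z0)‖
        ≤ ‖f.eval z0‖ + ‖∫ t in (1:ℝ)..R, z0 * (derivative f).eval ((t:ℂ) * z0)‖ := by
          rw [h1]; exact norm_add_le _ _
      _ ≤ ‖f.eval z0‖ + ∫ t in (1:ℝ)..R, ‖z0 * (derivative f).eval ((t:ℂ) * z0)‖ := by
          gcongr
          exact norm_integral_le_integral_norm (by linarith)
      _ = ‖f.eval z0‖ + ∫ t in (1:ℝ)..R, ‖(derivative f).eval ((t:ℂ) * z0)‖ := by
          congr 1
          refine integral_congr ?_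
          intro t _
          simp only [norm_mul, hz0, one_mul]
  -- sum of the two integrals is bounded by the integral of n M t^(n-1)
  have hsum_int : (∫ t in (1:ℝ)..R, ‖(derivative p).eval ((t:ℂ) * z0)‖) +
      (∫ t in (1:ℝ)..R, ‖(derivative (crev n p)).eval ((t:ℂ) * z0)‖)
      ≤ (R ^ n - 1) * polyMax p 1 := by
    have hIp := ((hcont p).intervalIntegrable (μ := MeasureTheory.volume) 1 R)
    have hIq := ((hcont (crev n p)).intervalIntegrable (μ := MeasureTheory.volume) 1 R)
    rw [← integral_add hIp hIq]
    have hbound : ∫ t in (1:ℝ)..R,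
        (‖(derivative p).eval ((t:ℂ) * z0)‖ + ‖(derivative (crev n p)).eval ((t:ℂ) * z0)‖)
        ≤ ∫ t in (1:ℝ)..R, (n * polyMax p 1) * t ^ (n-1) := by
      refine integral_mono_on hR (hIp.add hIq) ?_ ?_
      · exact (continuous_const.mul (continuous_pow (n-1))).intervalIntegrable _ _
      · intro t ht
        have ht1 : 1 ≤ t := ht.1
        have := deriv_sum_bound p n hn hdeg hM (w := (t:ℂ) * z0)
          (by rw [hnorm_t t ht1]; exact ht1)
        rwa [hnorm_t t ht1] at this
    have hval : ∫ t in (1:ℝ)..R, (n * polyMax p 1) * t ^ (n-1)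
        = (R ^ n - 1) * polyMax p 1 := by
      rw [integral_const_mul, integral_pow]
      have hnn : n - 1 + 1 = n := Nat.succ_pred_eq_of_pos hn
      rw [hnn, one_pow]
      have hncast : ((n - 1 : ℕ) : ℝ) + 1 = (n : ℝ) := by
        rw [Nat.cast_sub hn]
        push_cast
        ring
      rw [hncast]
      have hn0 : (n:ℝ) ≠ 0 := by positivity
      field_simp
    linarith
  have h1 := ftc p
  have h2 := ftc (crev n p)
  have hq1 : ‖(crev n p).eval z0‖ = ‖p.eval z0‖ :=
    norm_crev_circle n p (le_of_eq hdeg) hz0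
  have hp1 : ‖p.eval z0‖ ≤ polyMax p 1 := le_polyMax p hz0
  have hfinal : ‖p.eval ((R:ℂ) * z0)‖ + ‖(crev n p).eval ((R:ℂ) * z0)‖
      ≤ 2 * polyMax p 1 + (R ^ n - 1) * polyMax p 1 := by
    rw [hq1] at h2
    linarith
  linarith [hfinal]

theorem ankeny_rivlin_main (p : Polynomial ℂ) (n : ℕ) (hn : 1 ≤ n)
    (hdeg : p.natDegree = n)
    (hnz : ∀ z : ℂ, ‖z‖ < 1 → p.eval z ≠ 0)
    (R : ℝ) (hR : 1 ≤ R) :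
    polyMax p R ≤ ((R ^ n + 1) / 2) * polyMax p 1 := by
  have hM := Mpos p hnz
  refine polyMax_le p (by linarith) ?_
  intro z hz
  have hz1 : 1 ≤ ‖z‖ := by rw [hz]; exact hR
  have hR0 : (R:ℂ) ≠ 0 := by
    simp only [ne_eq, Complex.ofReal_eq_zero]
    linarith
  obtain ⟨z0, hz0eq⟩ : ∃ z0 : ℂ, z0 = ((R:ℂ))⁻¹ * z := ⟨_, rfl⟩
  have hz0 : ‖z0‖ = 1 := by
    rw [hz0eq, norm_mul, norm_inv, Complex.norm_real, Real.norm_of_nonneg (by linarith), hz]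
    field_simp
  have hzz : z = (R:ℂ) * z0 := by
    rw [hz0eq, ← mul_assoc, mul_inv_cancel₀ hR0, one_mul]
  have h1 : ‖p.eval z‖ ≤ ‖(crev n p).eval z‖ :=
    ext_le p n (le_of_eq hdeg) hnz hz1
  have h2 := sum_bound_R p n hn hdeg hM hz0 hR
  rw [← hzz] at h2
  linarith


end AR

theorem ankeny_rivlin (p : Polynomial ℂ) (n : ℕ) (hn : 1 ≤ n)
    (hdeg : p.natDegree = n)
    (hnz : ∀ z : ℂ, ‖z‖ < 1 → p.eval z ≠ 0)
    (R : ℝ) (hR : 1 ≤ R) :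
    polyMax p R ≤ ((R ^ n + 1) / 2) * polyMax p 1 :=
  AR.ankeny_rivlin_main p n hn hdeg hnz R hR
end

section
/- Let p(z) be a polynomial of degree n having all its zeros on the circle |z| = K with 0 < K ≤ 1. Then for every R ≥ 1 and every positive integer s, (max_{|z|=R} |p(z)|)^s ≤ [(K^{n-1}(1+K) + (R^{ns} − 1)) / (K^{n-1} + K^n)] · (max_{|z|=1} |p(z)|)^s. -/
open Polynomial Metric Set Complex

namespace DewanAhujaAux

lemma bdd (p : Polynomial ℂ) (r : ℝ) :
    BddAbove (Set.range fun z : Metric.sphere (0:ℂ) r => ‖p.eval (z : ℂ)‖) := by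
  have hc : IsCompact (Metric.sphere (0:ℂ) r) := isCompact_sphere 0 r
  have h2 := hc.bddAbove_image (f := fun z : ℂ => ‖p.eval z‖)
    (by fun_prop : Continuous fun z : ℂ => ‖p.eval z‖).continuousOn
  rwa [Set.image_eq_range] at h2

lemma le_polyMax {p : Polynomial ℂ} {r : ℝ} {z : ℂ} (hz : ‖z‖ = r) :
    ‖p.eval z‖ ≤ polyMax p r := by
  have hmem : z ∈ Metric.sphere (0:ℂ) r := by simpa [mem_sphere_zero_iff_norm] using hz
  exact le_ciSup (bdd p r) (⟨z, hmem⟩ : Metric.sphere (0:ℂ) r)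

lemma polyMax_le {p : Polynomial ℂ} {r C : ℝ} (hr : 0 ≤ r)
    (h : ∀ z : ℂ, ‖z‖ = r → ‖p.eval z‖ ≤ C) : polyMax p r ≤ C := by
  have hne : (Metric.sphere (0:ℂ) r).Nonempty := NormedSpace.sphere_nonempty.mpr hr
  haveI : Nonempty (Metric.sphere (0:ℂ) r) := hne.coe_sort
  exact ciSup_le fun z => h z (mem_sphere_zero_iff_norm.mp z.2)

lemma polyMax_nonneg (p : Polynomial ℂ) {r : ℝ} (hr : 0 ≤ r) : 0 ≤ polyMax p r := by
  have hne : (Metric.sphere (0:ℂ) r).Nonempty := NormedSpace.sphere_nonempty.mpr hr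
  obtain ⟨z, hz⟩ := hne
  exact le_trans (norm_nonneg _) (le_polyMax (mem_sphere_zero_iff_norm.mp hz))

lemma exists_polyMax (p : Polynomial ℂ) {r : ℝ} (hr : 0 ≤ r) :
    ∃ z : ℂ, ‖z‖ = r ∧ polyMax p r = ‖p.eval z‖ := by
  have hne : (Metric.sphere (0:ℂ) r).Nonempty := NormedSpace.sphere_nonempty.mpr hr
  obtain ⟨z, hzmem, hzmax⟩ := (isCompact_sphere (0:ℂ) r).exists_isMaxOn hne
    (by fun_prop : Continuous fun z : ℂ => ‖p.eval z‖).continuousOn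
  refine ⟨z, mem_sphere_zero_iff_norm.mp hzmem, le_antisymm ?_ ?_⟩
  · exact polyMax_le hr fun w hw => hzmax (by simpa [mem_sphere_zero_iff_norm] using hw)
  · exact le_polyMax (mem_sphere_zero_iff_norm.mp hzmem)

/-- Maximum modulus principle for polynomials on a closed ball. -/
lemma maxmod {p : Polynomial ℂ} {ρ : ℝ} (hρ : 0 < ρ) {z : ℂ} (hz : ‖z‖ ≤ ρ) :
    ‖p.eval z‖ ≤ polyMax p ρ := by
  have hfr : frontier (Metric.ball (0:ℂ) ρ) = Metric.sphere 0 ρ := frontier_ball 0 hρ.ne'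
  have hcl : closure (Metric.ball (0:ℂ) ρ) = Metric.closedBall 0 ρ := closure_ball 0 hρ.ne'
  refine Complex.norm_le_of_forall_mem_frontier_norm_le (U := Metric.ball 0 ρ)
    isBounded_ball ((p.differentiable).diffContOnCl) (fun w hw => ?_) ?_
  · rw [hfr] at hw
    exact le_polyMax (mem_sphere_zero_iff_norm.mp hw)
  · rw [hcl]
    simpa [mem_closedBall_zero_iff] using hz

lemma normconj (x : ℂ) : ‖(starRingEnd ℂ) x‖ = ‖x‖ := by
  rw [Complex.norm_conj]

lemma growth {f : Polynomial ℂ} {ρ r : ℝ} (hρ : 0 < ρ) (hr : ρ ≤ r) {z : ℂ} (hz : ‖z‖ = r) :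
    ‖f.eval z‖ ≤ (r/ρ)^f.natDegree * polyMax f ρ := by
  have hr0 : 0 < r := lt_of_lt_of_le hρ hr
  have hρC : ((ρ:ℂ))^2 ≠ 0 := pow_ne_zero 2 (by exact_mod_cast hρ.ne')
  have hzne : z ≠ 0 := by
    intro h; rw [h, norm_zero] at hz; exact absurd hz.symm (ne_of_gt hr0)
  set n := f.natDegree with hn
  set F : Polynomial ℂ := ∑ k ∈ Finset.range (n+1),
    C ((starRingEnd ℂ) (f.coeff k) * (ρ:ℂ)^(2*k)) * X^(n-k) with hF
  have key : ∀ w : ℂ, w ≠ 0 →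
      F.eval w = w^n * (starRingEnd ℂ) (f.eval (((ρ:ℂ)^2)/((starRingEnd ℂ) w))) := by
    intro w hw
    rw [Polynomial.eval_eq_sum_range (p := f)]
    push_cast [hF, Polynomial.eval_finset_sum, map_sum]
    rw [Finset.mul_sum]
    refine Finset.sum_congr rfl fun k hk => ?_
    have hk' : k ≤ n := Nat.lt_succ_iff.mp (Finset.mem_range.mp hk)
    simp only [Polynomial.eval_mul, Polynomial.eval_C, Polynomial.eval_pow, Polynomial.eval_X,
      map_mul, map_pow]
    have : ((starRingEnd ℂ) ((ρ:ℂ)^2 / (starRingEnd ℂ) w))^k = (ρ:ℂ)^(2*k) / w^k := by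
      rw [map_div₀, map_pow, Complex.conj_conj, Complex.conj_ofReal]
      rw [div_pow, ← pow_mul', Nat.mul_comm]
    rw [this, pow_sub₀ w hw hk']
    field_simp
  -- max of F on sphere ρ
  have hFmax : polyMax F ρ ≤ ρ^n * polyMax f ρ := by
    refine polyMax_le hρ.le fun w hw => ?_
    have hwne : w ≠ 0 := by
      intro h; rw [h, norm_zero] at hw; exact absurd hw.symm (ne_of_gt hρ)
    have hcw : ((ρ:ℂ)^2)/((starRingEnd ℂ) w) = w := by
      rw [div_eq_iff (by simpa using hwne)]
      rw [mul_comm, Complex.conj_mul']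
      norm_cast
      rw [hw]
    rw [key w hwne, hcw, norm_mul, norm_pow, hw, normconj]
    exact mul_le_mul_of_nonneg_left (le_polyMax (p := f) (r := ρ) hw) (by positivity)
  -- evaluate at w₀
  set w₀ : ℂ := ((ρ:ℂ)^2)/((starRingEnd ℂ) z) with hw₀
  have hw₀ne : w₀ ≠ 0 := by
    apply div_ne_zero hρC
    simpa using hzne
  have hw₀norm : ‖w₀‖ = ρ^2/r := by
    rw [hw₀, norm_div, norm_pow, normconj, hz]
    norm_num
  have hw₀le : ‖w₀‖ ≤ ρ := by
    rw [hw₀norm, div_le_iff₀ hr0]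
    calc ρ^2 = ρ * ρ := sq ρ
      _ ≤ ρ * r := by nlinarith
  have hback : ((ρ:ℂ)^2)/((starRingEnd ℂ) w₀) = z := by
    rw [hw₀, map_div₀, map_pow, Complex.conj_ofReal, Complex.conj_conj]
    rw [div_div_eq_mul_div, mul_comm, mul_div_assoc, div_self hρC, mul_one]
  have hkey := key w₀ hw₀ne
  rw [hback] at hkey
  have hFw : ‖F.eval w₀‖ = (ρ^2/r)^n * ‖f.eval z‖ := by
    rw [hkey, norm_mul, norm_pow, hw₀norm, normconj]
  have hineq : (ρ^2/r)^n * ‖f.eval z‖ ≤ ρ^n * polyMax f ρ := by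
    rw [← hFw]
    exact le_trans (maxmod hρ hw₀le) hFmax
  have hpos : 0 < (ρ^2/r)^n := by positivity
  have hco : (ρ^2/r)^n * ((r/ρ)^n * polyMax f ρ) = ρ^n * polyMax f ρ := by
    rw [← mul_assoc, ← mul_pow]
    congr 2
    field_simp
  rw [← mul_le_mul_iff_right₀ hpos, hco]
  exact hineq

lemma sqnorm (v : ℂ) : ‖v‖^2 = v.re^2 + v.im^2 := by
  rw [Complex.sq_norm, Complex.normSq_apply]; ring

lemma L1 {r : ℝ} (hr : 1 ≤ r) {z w : ℂ} (h : ‖w‖ ≤ ‖z‖) :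
    ((r+1)/2) * ‖z - w‖ ≤ ‖(r:ℂ) * z - w‖ := by
  have hc : (0:ℝ) ≤ (r+1)/2 := by linarith
  have hnn : (0:ℝ) ≤ ((r+1)/2) * ‖z - w‖ := mul_nonneg hc (norm_nonneg _)
  have h2 : (((r+1)/2) * ‖z - w‖)^2 ≤ ‖(r:ℂ) * z - w‖^2 := by
    have hw2 : w.re^2 + w.im^2 ≤ z.re^2 + z.im^2 := by
      have := pow_le_pow_left₀ (norm_nonneg w) h 2
      rw [sqnorm, sqnorm] at this; exact this
    rw [mul_pow, sqnorm, sqnorm]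
    simp only [Complex.sub_re, Complex.sub_im, Complex.mul_re, Complex.mul_im,
      Complex.ofReal_re, Complex.ofReal_im]
    have h3 : (0:ℝ) ≤ (r-1)^2 * ((z.re+w.re)^2 + (z.im+w.im)^2) := by positivity
    have h4 : (0:ℝ) ≤ (z.re^2+z.im^2 - (w.re^2+w.im^2)) * (r^2-1) :=
      mul_nonneg (by linarith) (by nlinarith)
    nlinarith [h3, h4]
  exact (pow_le_pow_iff_left₀ hnn (norm_nonneg _) two_ne_zero).mp h2

lemma L2 {z v : ℂ} (h : ‖z‖ ≤ ‖v‖) (hne : z ≠ v) : (z * (z-v)⁻¹).re ≤ 1/2 := by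
  have hd : z - v ≠ 0 := sub_ne_zero.mpr hne
  have hN : 0 < Complex.normSq (z - v) := Complex.normSq_pos.mpr hd
  have h2 : z.re^2 + z.im^2 ≤ v.re^2 + v.im^2 := by
    have := pow_le_pow_left₀ (norm_nonneg z) h 2
    rw [sqnorm, sqnorm] at this; exact this
  rw [← div_eq_mul_inv, Complex.div_re, ← add_div, div_le_iff₀ hN]
  simp only [Complex.normSq_apply, Complex.sub_re, Complex.sub_im]
  nlinarith [h2]

lemma L2eq {z v : ℂ} (h : ‖z‖ = ‖v‖) (hne : z ≠ v) : (z * (z-v)⁻¹).re = 1/2 := by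
  have hd : z - v ≠ 0 := sub_ne_zero.mpr hne
  have hN : 0 < Complex.normSq (z - v) := Complex.normSq_pos.mpr hd
  have h2 : z.re^2 + z.im^2 = v.re^2 + v.im^2 := by
    have := congrArg (fun x : ℝ => x^2) h
    rw [sqnorm, sqnorm] at this; exact this
  rw [← div_eq_mul_inv, Complex.div_re, ← add_div, div_eq_iff hN.ne']
  simp only [Complex.normSq_apply, Complex.sub_re, Complex.sub_im]
  nlinarith [h2]

lemma norm_msprod (m : Multiset ℂ) : ‖m.prod‖ = (m.map fun x => ‖x‖).prod := by
  induction m using Multiset.induction_on with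
  | empty => simp
  | cons a t ih => simp [Multiset.prod_cons, norm_mul, ih]

lemma re_mssum (m : Multiset ℂ) : m.sum.re = (m.map Complex.re).sum := by
  induction m using Multiset.induction_on with
  | empty => simp
  | cons a t ih => simp [Multiset.sum_cons, Complex.add_re, ih]

lemma deriv_prod_eval (V : Multiset ℂ) (z : ℂ) (hz : ∀ v ∈ V, z ≠ v) :
    (derivative (V.map fun a => X - C a).prod).eval z
      = ((V.map fun a => X - C a).prod.eval z) * (V.map fun v => (z - v)⁻¹).sum := by
  induction V using Multiset.induction_on with
  | empty => simp
  | cons a T ih =>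
    have hza : z - a ≠ 0 := sub_ne_zero.mpr (hz a (Multiset.mem_cons_self a T))
    have ih' := ih (fun v hv => hz v (Multiset.mem_cons_of_mem hv))
    simp only [Multiset.map_cons, Multiset.prod_cons, Multiset.sum_cons, derivative_mul,
      eval_add, eval_mul, eval_sub, eval_X, eval_C, derivative_sub, derivative_X, derivative_C,
      sub_zero, eval_one, one_mul, ih']
    field_simp

lemma eval_deriv_eq (q : Polynomial ℂ) (z : ℂ) (hz : q.eval z ≠ 0) :
    z * (derivative q).eval z = q.eval z * ((q.roots.map fun v => z * (z - v)⁻¹).sum) := by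
  have hq : q ≠ 0 := fun h => hz (by simp [h])
  have hsp : q.Splits := IsAlgClosed.splits q
  have hfact := hsp.eq_prod_roots
  have hroot : ∀ v ∈ q.roots, z ≠ v := by
    intro v hv hzv
    refine hz ?_
    rw [hzv]
    exact (Polynomial.mem_roots hq).mp hv
  have hsum : (q.roots.map fun v => z * (z - v)⁻¹).sum
      = z * (q.roots.map fun v => (z - v)⁻¹).sum := by
    rw [Multiset.sum_map_mul_left]
  rw [hsum]
  set P : Polynomial ℂ := (q.roots.map fun a => X - C a).prod with hP
  set S : ℂ := (q.roots.map fun v => (z - v)⁻¹).sum with hS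
  have hd : (derivative q).eval z = (q.eval z) * S := by
    conv_lhs => rw [hfact]
    rw [derivative_C_mul, eval_mul, eval_C, deriv_prod_eval q.roots z hroot]
    have : q.leadingCoeff * (P.eval z * S) = ((C q.leadingCoeff * P).eval z) * S := by
      rw [eval_mul, eval_C]; ring
    rw [this, ← hfact]
  rw [hd]; ring

lemma sphere_infinite {K : ℝ} (hK : 0 < K) : (Metric.sphere (0:ℂ) K).Infinite := by
  have hinj : Set.InjOn (fun t : ℝ => (K:ℂ) * Complex.exp (t * Complex.I)) (Set.Icc 0 Real.pi) := by
    intro a ha b hb hab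
    simp only at hab
    have hKne : (K:ℂ) ≠ 0 := by exact_mod_cast hK.ne'
    have h2 : Complex.exp (a * Complex.I) = Complex.exp (b * Complex.I) :=
      mul_left_cancel₀ hKne hab
    have h3 : Real.cos a = Real.cos b := by
      have := congrArg Complex.re h2
      simpa [Complex.exp_ofReal_mul_I_re] using this
    exact Real.injOn_cos ha hb h3
  have hsub : (fun t : ℝ => (K:ℂ) * Complex.exp (t * Complex.I)) '' (Set.Icc 0 Real.pi)
      ⊆ Metric.sphere (0:ℂ) K := by
    rintro _ ⟨t, _, rfl⟩
    simp only [mem_sphere_zero_iff_norm, norm_mul, Complex.norm_real]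
    rw [Complex.norm_exp_ofReal_mul_I]
    simp [abs_of_pos hK]
  exact Set.Infinite.mono hsub ((Set.Icc_infinite Real.pi_pos).image hinj)

lemma polyMax_pos {p : Polynomial ℂ} (hp : p ≠ 0) {r : ℝ} (hr : 0 < r) :
    0 < polyMax p r := by
  have hfin := Polynomial.finite_setOf_isRoot hp
  obtain ⟨z, hzs, hznr⟩ := ((sphere_infinite hr).diff hfin).nonempty
  have : ‖p.eval z‖ > 0 := by
    simp only [Set.mem_setOf_eq, Polynomial.IsRoot] at hznr
    simpa [norm_pos_iff] using hznr
  exact lt_of_lt_of_le this (le_polyMax (mem_sphere_zero_iff_norm.mp hzs))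

lemma eval_norm_factored (c : ℂ) (W : Multiset ℂ) (z : ℂ) :
    ‖(C c * (W.map fun a => X - C a).prod).eval z‖
      = ‖c‖ * (W.map fun a => ‖z - a‖).prod := by
  rw [eval_mul, eval_C, norm_mul, Polynomial.eval_multiset_prod, Multiset.map_map, norm_msprod,
    Multiset.map_map]
  simp [Function.comp]

lemma lower (p : Polynomial ℂ) (n : ℕ) (hdeg : p.natDegree = n) (K : ℝ) (hK0 : 0 < K)
    (hK1 : K ≤ 1) (hroots : ∀ z : ℂ, p.eval z = 0 → ‖z‖ = K) (hp0 : p ≠ 0)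
    {z : ℂ} (hz : ‖z‖ = K) :
    ‖p.eval z‖ ≤ (2*K/(1+K))^n * polyMax p 1 := by
  have hsp : p.Splits := IsAlgClosed.splits p
  have hfact := hsp.eq_prod_roots
  have hcard : Multiset.card p.roots = n := by
    rw [Polynomial.splits_iff_card_roots.mp hsp, hdeg]
  have hWnorm : ∀ w ∈ p.roots, ‖w‖ = K := by
    intro w hw
    exact hroots w ((Polynomial.mem_roots hp0).mp hw)
  have hr1 : (1:ℝ) ≤ K⁻¹ := by
    rw [le_inv_comm₀ one_pos hK0]
    simpa using hK1
  set ζ : ℂ := ((K⁻¹:ℝ):ℂ) * z with hζ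
  have hζnorm : ‖ζ‖ = 1 := by
    rw [hζ, norm_mul, hz, Complex.norm_real, Real.norm_eq_abs, abs_of_pos (by positivity)]
    field_simp
  -- pointwise factor comparison
  have hfac : ∀ w ∈ p.roots, ((K⁻¹+1)/2) * ‖z - w‖ ≤ ‖ζ - w‖ := by
    intro w hw
    have := L1 hr1 (z := z) (w := w) (by rw [hWnorm w hw, hz])
    simpa [hζ] using this
  -- products
  have hprod : (((K⁻¹+1)/2))^n * (p.roots.map fun w => ‖z - w‖).prod
      ≤ (p.roots.map fun w => ‖ζ - w‖).prod := by
    have h1 : ((p.roots.map fun w => ((K⁻¹+1)/2) * ‖z - w‖)).prod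
        ≤ (p.roots.map fun w => ‖ζ - w‖).prod := by
      refine Multiset.prod_map_le_prod_map₀ _ _ (fun w _ => by positivity) hfac
    calc (((K⁻¹+1)/2))^n * (p.roots.map fun w => ‖z - w‖).prod
        = ((p.roots.map fun w => ((K⁻¹+1)/2) * ‖z - w‖)).prod := by
          rw [Multiset.prod_map_mul (f := fun _ => ((K⁻¹+1)/2)) (g := fun w => ‖z - w‖),
            Multiset.map_const', Multiset.prod_replicate, hcard]
      _ ≤ _ := h1
  have hevz : ‖p.eval z‖ = ‖p.leadingCoeff‖ * (p.roots.map fun w => ‖z - w‖).prod := by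
    conv_lhs => rw [hfact]
    exact eval_norm_factored _ _ _
  have hevζ : ‖p.eval ζ‖ = ‖p.leadingCoeff‖ * (p.roots.map fun w => ‖ζ - w‖).prod := by
    conv_lhs => rw [hfact]
    exact eval_norm_factored _ _ _
  have hchain : (((K⁻¹+1)/2))^n * ‖p.eval z‖ ≤ polyMax p 1 := by
    calc (((K⁻¹+1)/2))^n * ‖p.eval z‖
        = ‖p.leadingCoeff‖ * ((((K⁻¹+1)/2))^n * (p.roots.map fun w => ‖z - w‖).prod) := by
          rw [hevz]; ring
      _ ≤ ‖p.leadingCoeff‖ * (p.roots.map fun w => ‖ζ - w‖).prod :=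
          mul_le_mul_of_nonneg_left hprod (norm_nonneg _)
      _ = ‖p.eval ζ‖ := hevζ.symm
      _ ≤ polyMax p 1 := le_polyMax hζnorm
  have hcpos : (0:ℝ) < (((K⁻¹+1)/2))^n := by positivity
  have hEq : ((((K⁻¹+1)/2))^n)⁻¹ = (2*K/(1+K))^n := by
    rw [← inv_pow]
    congr 1
    field_simp
  calc ‖p.eval z‖ = ((((K⁻¹+1)/2))^n)⁻¹ * ((((K⁻¹+1)/2))^n * ‖p.eval z‖) := by
        field_simp
    _ ≤ ((((K⁻¹+1)/2))^n)⁻¹ * polyMax p 1 :=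
        mul_le_mul_of_nonneg_left hchain (by positivity)
    _ = (2*K/(1+K))^n * polyMax p 1 := by rw [hEq]

lemma normlehalf {w : ℂ} {m : ℝ} (hm : 0 ≤ m) (h : w.re ≤ m/2) : ‖w‖ ≤ ‖(m:ℂ) - w‖ := by
  have h2 : ‖w‖^2 ≤ ‖(m:ℂ) - w‖^2 := by
    rw [sqnorm, sqnorm]
    simp only [Complex.sub_re, Complex.sub_im, Complex.ofReal_re, Complex.ofReal_im]
    nlinarith [mul_nonneg hm (sub_nonneg.mpr h)]
  exact (pow_le_pow_iff_left₀ (norm_nonneg _) (norm_nonneg _) two_ne_zero).mp h2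

lemma normeqhalf {w : ℂ} {m : ℝ} (h : w.re = m/2) : ‖w‖ = ‖(m:ℂ) - w‖ := by
  have h2 : ‖w‖^2 = ‖(m:ℂ) - w‖^2 := by
    rw [sqnorm, sqnorm]
    simp only [Complex.sub_re, Complex.sub_im, Complex.ofReal_re, Complex.ofReal_im]
    have hm : m = 2 * w.re := by linarith
    rw [hm]; ring
  have := congrArg Real.sqrt h2
  rwa [Real.sqrt_sq (norm_nonneg _), Real.sqrt_sq (norm_nonneg _)] at this

lemma deriv_bound_at (p : Polynomial ℂ) (n : ℕ) (hn : 1 ≤ n) (hdeg : p.natDegree = n)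
    (K : ℝ) (hK0 : 0 < K) (hroots : ∀ z : ℂ, p.eval z = 0 → ‖z‖ = K) (hp0 : p ≠ 0)
    {z₀ : ℂ} (h0 : ‖z₀‖ = K) :
    2 * ‖z₀ * (derivative p).eval z₀‖ ≤ n * polyMax p K := by
  set MK := polyMax p K with hMKdef
  have hMK : 0 < MK := polyMax_pos hp0 hK0
  have hnMK : 0 < (n:ℝ) * MK := by
    have : (0:ℝ) < n := by exact_mod_cast hn
    positivity
  set A : ℂ := z₀ * (derivative p).eval z₀ with hA
  set B : ℂ := (n:ℂ) * p.eval z₀ - A with hB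
  -- step (a)
  have hBA : ‖B‖ = ‖A‖ := by
    by_cases hpz : p.eval z₀ = 0
    · rw [hB, hpz]
      simp
    · have hld := eval_deriv_eq p z₀ hpz
      set S : ℂ := (p.roots.map fun v => z₀ * (z₀ - v)⁻¹).sum with hS
      have hSre : S.re = (n:ℝ)/2 := by
        rw [hS, re_mssum, Multiset.map_map]
        have hmap : (p.roots.map ((Complex.re) ∘ fun v => z₀ * (z₀ - v)⁻¹))
            = p.roots.map (fun _ => (1/2 : ℝ)) := by
          refine Multiset.map_congr rfl fun v hv => ?_
          have hvr : p.eval v = 0 := (Polynomial.mem_roots hp0).mp hv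
          have hne : z₀ ≠ v := fun hzv => hpz (hzv ▸ hvr)
          have hnorm : ‖z₀‖ = ‖v‖ := by rw [h0, hroots v hvr]
          simpa using L2eq hnorm hne
        rw [hmap, Multiset.map_const', Multiset.sum_replicate]
        have hcard : Multiset.card p.roots = n := by
          rw [Polynomial.splits_iff_card_roots.mp (IsAlgClosed.splits p), hdeg]
        rw [hcard, nsmul_eq_mul]
        ring
      have hBeq : B = p.eval z₀ * ((n:ℂ) - S) := by
        rw [hB, hA, hld, hS]
        ring
      have hAeq : A = p.eval z₀ * S := by rw [hA, hld, hS]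
      rw [hBeq, hAeq, norm_mul, norm_mul]
      congr 1
      have hnh := normeqhalf (w := S) (m := (n:ℝ)) (by rw [hSre])
      push_cast at hnh
      exact hnh.symm
  -- core estimate with ε
  have core : ∀ ε : ℝ, 0 < ε → 2 * ‖A‖ ≤ (1+ε) * ((n:ℝ) * MK) := by
    intro ε hε
    by_cases hB0 : B = 0
    · have : ‖A‖ = 0 := by rw [← hBA, hB0, norm_zero]
      rw [this]
      nlinarith [hnMK, hε]
    · have hBn : (0:ℝ) < ‖B‖ := norm_pos_iff.mpr hB0
      set lam : ℂ := (((1+ε)/‖B‖ : ℝ):ℂ) * B with hlam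
      have hlamnorm : ‖lam‖ = 1 + ε := by
        rw [hlam, norm_mul, Complex.norm_real, Real.norm_eq_abs,
          abs_of_pos (by positivity : (0:ℝ) < (1+ε)/‖B‖), div_mul_cancel₀ _ hBn.ne']
      set g : Polynomial ℂ := p - C (lam * ((MK:ℝ):ℂ)) with hg
      have hgeval : ∀ v : ℂ, g.eval v = p.eval v - lam * (MK:ℂ) := by
        intro v; rw [hg]; simp
      have hgz : ∀ v : ℂ, ‖v‖ ≤ K → g.eval v ≠ 0 := by
        intro v hv hg0
        rw [hgeval v, sub_eq_zero] at hg0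
        have h1 : ‖p.eval v‖ ≤ MK := maxmod hK0 hv
        have h2 : ‖p.eval v‖ = (1+ε) * MK := by
          rw [hg0, norm_mul, hlamnorm, Complex.norm_real, Real.norm_eq_abs, abs_of_pos hMK]
        nlinarith
      have hg0 : g ≠ 0 := by
        intro h
        exact hgz 0 (by simpa using hK0.le) (by rw [h]; simp)
      have hgz₀ : g.eval z₀ ≠ 0 := hgz z₀ (le_of_eq h0)
      have hgroots : ∀ v ∈ g.roots, K < ‖v‖ := by
        intro v hv
        by_contra hnk
        exact hgz v (not_lt.mp hnk) ((Polynomial.mem_roots hg0).mp hv)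
      have hgcard : Multiset.card g.roots = n := by
        rw [Polynomial.splits_iff_card_roots.mp (IsAlgClosed.splits g), hg,
          Polynomial.natDegree_sub_C, hdeg]
      have hgderiv : derivative g = derivative p := by
        rw [hg]; simp
      have hld2 := eval_deriv_eq g z₀ hgz₀
      set S₂ : ℂ := (g.roots.map fun v => z₀ * (z₀ - v)⁻¹).sum with hS₂
      have hS₂re : S₂.re ≤ (n:ℝ)/2 := by
        rw [hS₂, re_mssum, Multiset.map_map]
        have hle : (g.roots.map ((Complex.re) ∘ fun v => z₀ * (z₀ - v)⁻¹)).sum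
            ≤ (g.roots.map (fun _ => (1/2 : ℝ))).sum := by
          refine Multiset.sum_map_le_sum_map _ _ fun v hv => ?_
          have hKv := hgroots v hv
          have hne : z₀ ≠ v := by
            intro hzv
            rw [← hzv, h0] at hKv
            exact lt_irrefl _ hKv
          simpa using L2 (by rw [h0]; exact hKv.le) hne
        refine le_trans hle ?_
        rw [Multiset.map_const', Multiset.sum_replicate, hgcard, nsmul_eq_mul]
        ring_nf
        exact le_refl _
      have hnormS₂ : ‖S₂‖ ≤ ‖((n:ℝ):ℂ) - S₂‖ :=
        normlehalf (by positivity) hS₂re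
      -- chain
      have hmain : ‖A‖ ≤ ‖B - (n:ℂ) * lam * ((MK:ℝ):ℂ)‖ := by
        have e1 : ‖A‖ = ‖g.eval z₀‖ * ‖S₂‖ := by
          rw [hA, ← hgderiv, hld2, hS₂, norm_mul]
        have e2 : ‖g.eval z₀‖ * ‖((n:ℝ):ℂ) - S₂‖ = ‖B - (n:ℂ) * lam * ((MK:ℝ):ℂ)‖ := by
          rw [← norm_mul]
          congr 1
          rw [hB, hA, ← hgderiv]
          have : z₀ * (derivative g).eval z₀ = g.eval z₀ * S₂ := by rw [hld2, hS₂]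
          rw [this, hgeval z₀]
          push_cast
          ring
        rw [e1, ← e2]
        exact mul_le_mul_of_nonneg_left hnormS₂ (norm_nonneg _)
      -- compute RHS norm
      have hscal : B - (n:ℂ) * lam * ((MK:ℝ):ℂ)
          = ((1 - ((n:ℝ) * MK * (1+ε))/‖B‖ : ℝ):ℂ) * B := by
        rw [hlam]
        push_cast
        ring
      have habs : ‖B - (n:ℂ) * lam * ((MK:ℝ):ℂ)‖ = |‖B‖ - (1+ε) * ((n:ℝ)*MK)| := by
        rw [hscal, norm_mul, Complex.norm_real, Real.norm_eq_abs]
        rw [← abs_of_pos hBn, ← abs_mul]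
        congr 1
        rw [abs_of_pos hBn, sub_mul, one_mul, div_mul_cancel₀ _ hBn.ne']
        ring
      rw [habs, hBA] at hmain
      rcases le_or_gt (‖A‖) ((1+ε) * ((n:ℝ)*MK)) with hcase | hcase
      · rw [abs_of_nonpos (by linarith)] at hmain
        linarith
      · rw [abs_of_pos (by linarith)] at hmain
        nlinarith
  -- conclude
  have hfin : 2 * ‖A‖ ≤ (n:ℝ) * MK := by
    refine le_of_forall_pos_le_add fun δ hδ => ?_
    have hε : 0 < δ / ((n:ℝ)*MK) := by positivity
    have := core _ hε
    calc 2 * ‖A‖ ≤ (1 + δ/((n:ℝ)*MK)) * ((n:ℝ) * MK) := this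
      _ = (n:ℝ)*MK + δ := by field_simp
  rw [hA] at hfin
  linarith

lemma D1_bound (p : Polynomial ℂ) (n : ℕ) (hn : 1 ≤ n) (hdeg : p.natDegree = n)
    (K : ℝ) (hK0 : 0 < K) (hK1 : K ≤ 1)
    (hroots : ∀ z : ℂ, p.eval z = 0 → ‖z‖ = K) (hp0 : p ≠ 0) :
    polyMax (derivative p) 1 ≤ ((n:ℝ)/(K^(n-1)*(1+K))) * polyMax p 1 := by
  set m := n - 1 with hmdef
  have hm : m + 1 = n := by omega
  have hKp : (0:ℝ) < 1 + K := by linarith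
  set M1 := polyMax p 1 with hM1
  have hM1nn : 0 ≤ M1 := polyMax_nonneg p one_pos.le
  set MK := polyMax p K with hMK
  -- step 1 : max of p' on sphere K
  have step1 : polyMax (derivative p) K ≤ (n:ℝ) * MK / (2*K) := by
    refine polyMax_le hK0.le fun z hz => ?_
    have h := deriv_bound_at p n hn hdeg K hK0 hroots hp0 hz
    rw [norm_mul, hz] at h
    rw [le_div_iff₀ (by positivity)]
    linarith
  -- step 3 : MK vs M1
  have step3 : MK ≤ (2*K/(1+K))^n * M1 := by
    refine polyMax_le hK0.le fun z hz => ?_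
    exact lower p n hdeg K hK0 hK1 hroots hp0 hz
  -- step 2 : growth of p' from K to 1
  have step2 : polyMax (derivative p) 1 ≤ (1/K)^m * polyMax (derivative p) K := by
    refine polyMax_le one_pos.le fun z hz => ?_
    have h := growth (f := derivative p) hK0 hK1 hz
    have hdm : (derivative p).natDegree ≤ m := by
      rw [hmdef, ← hdeg]; exact natDegree_derivative_le p
    have hpow : (1/K)^(derivative p).natDegree ≤ (1/K)^m := by
      apply pow_le_pow_right₀ _ hdm
      rw [le_div_iff₀ hK0]; linarith
    calc ‖(derivative p).eval z‖ ≤ (1/K)^(derivative p).natDegree * polyMax (derivative p) K :=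
          h
      _ ≤ (1/K)^m * polyMax (derivative p) K :=
          mul_le_mul_of_nonneg_right hpow (polyMax_nonneg _ hK0.le)
  -- combine
  have hMKnn : 0 ≤ MK := polyMax_nonneg p hK0.le
  have chain : polyMax (derivative p) 1 ≤ (1/K)^m * ((n:ℝ) * ((2*K/(1+K))^n * M1) / (2*K)) := by
    refine le_trans step2 ?_
    have h1 : polyMax (derivative p) K ≤ (n:ℝ) * ((2*K/(1+K))^n * M1) / (2*K) := by
      refine le_trans step1 ?_
      have h2 : (n:ℝ) * MK ≤ (n:ℝ) * ((2*K/(1+K))^n * M1) :=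
        mul_le_mul_of_nonneg_left step3 (by positivity)
      exact (div_le_div_iff_of_pos_right (by positivity : (0:ℝ) < 2*K)).mpr h2
    exact mul_le_mul_of_nonneg_left h1 (by positivity)
  refine le_trans chain ?_
  -- numeric comparison
  have hexp : (1/K)^m * ((n:ℝ) * ((2*K/(1+K))^n * M1) / (2*K)) = (n:ℝ) * M1 * 2^m / (1+K)^n := by
    rw [← hm, pow_succ]
    rw [div_pow, div_pow, mul_pow]
    field_simp
    ring
  rw [hexp, div_le_iff₀ (by positivity), div_mul_eq_mul_div, div_mul_eq_mul_div,
    le_div_iff₀ (by positivity)]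
  have h2K : (2*K)^m ≤ (1+K)^m := pow_le_pow_left₀ (by positivity) (by linarith) m
  have hnn : (0:ℝ) ≤ (n:ℝ) * M1 * (1+K) := by positivity
  calc (n:ℝ) * M1 * 2^m * (K^m * (1+K)) = ((n:ℝ)*M1*(1+K)) * (2*K)^m := by
        rw [mul_pow]; ring
    _ ≤ ((n:ℝ)*M1*(1+K)) * (1+K)^m := mul_le_mul_of_nonneg_left h2K hnn
    _ = (n:ℝ)*M1*(1+K)^n := by rw [← hm, pow_succ]; ring

end DewanAhujaAux

open DewanAhujaAux

theorem dewan_ahuja (p : Polynomial ℂ) (n : ℕ) (hn : 1 ≤ n)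
    (hdeg : p.natDegree = n) (K : ℝ) (hK0 : 0 < K) (hK1 : K ≤ 1)
    (hroots : ∀ z : ℂ, p.eval z = 0 → ‖z‖ = K)
    (R : ℝ) (hR : 1 ≤ R) (s : ℕ) (hs : 1 ≤ s) :
    (polyMax p R) ^ s ≤
      ((K ^ (n - 1) * (1 + K) + (R ^ (n * s) - 1)) / (K ^ (n - 1) + K ^ n)) *
        (polyMax p 1) ^ s := by
  have hp0 : p ≠ 0 := by
    intro h
    have h1 := hroots 0 (by simp [h])
    have h2 := hroots 1 (by simp [h])
    rw [norm_zero] at h1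
    rw [norm_one] at h2
    linarith
  have hR0 : (0:ℝ) < R := lt_of_lt_of_le one_pos hR
  set M1 := polyMax p 1 with hM1def
  have hM1nn : 0 ≤ M1 := polyMax_nonneg p one_pos.le
  set D1 := polyMax (derivative p) 1 with hD1def
  have hD1 := D1_bound p n hn hdeg K hK0 hK1 hroots hp0
  have hD1nn : 0 ≤ D1 := polyMax_nonneg _ one_pos.le
  obtain ⟨z₀, hz₀norm, hz₀max⟩ := exists_polyMax p hR0.le
  set u : ℂ := z₀ / (R:ℂ) with hu_def
  have hRC : (R:ℂ) ≠ 0 := by exact_mod_cast hR0.ne'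
  have hu : ‖u‖ = 1 := by
    rw [hu_def, norm_div, hz₀norm, Complex.norm_real, Real.norm_eq_abs, abs_of_pos hR0,
      div_self hR0.ne']
  have huR : u * (R:ℂ) = z₀ := by
    rw [hu_def]; field_simp
  set q : Polynomial ℂ := p.comp (C u * X) with hq_def
  have hqeval : ∀ t : ℂ, q.eval t = p.eval (u * t) := by
    intro t; rw [hq_def, eval_comp]; simp
  set Q : Polynomial ℂ := q ^ s with hQ_def
  have hQeval : ∀ t : ℂ, Q.eval t = (p.eval (u * t))^s := by
    intro t; rw [hQ_def, eval_pow, hqeval]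
  -- norm of u * t for t real positive
  have hut : ∀ t : ℝ, 0 ≤ t → ‖u * (t:ℂ)‖ = t := by
    intro t ht
    rw [norm_mul, hu, one_mul, Complex.norm_real, Real.norm_eq_abs, _root_.abs_of_nonneg ht]
  -- derivative of Q
  have hq' : derivative q = C u * (derivative p).comp (C u * X) := by
    rw [hq_def, derivative_comp, derivative_C_mul, derivative_X, mul_one, mul_comm]
  have hQ' : derivative Q = C (s:ℂ) * q^(s-1) * (C u * (derivative p).comp (C u * X)) := by
    rw [hQ_def, derivative_pow, hq']
  -- pointwise bound for the integrand
  set Cb : ℝ := (s:ℝ) * M1^(s-1) * D1 with hCb_def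
  have hptw : ∀ t ∈ Set.Icc (1:ℝ) R, ‖(derivative Q).eval (t:ℂ)‖ ≤ Cb * t^(n*s-1) := by
    intro t ht
    obtain ⟨ht1, htR⟩ := ht
    have ht0 : (0:ℝ) < t := lt_of_lt_of_le one_pos ht1
    have hutn : ‖u * (t:ℂ)‖ = t := hut t ht0.le
    have hbp : ‖p.eval (u * t)‖ ≤ t^n * M1 := by
      have := growth (f := p) one_pos ht1 hutn
      rwa [div_one, hdeg] at this
    have hbp' : ‖(derivative p).eval (u * t)‖ ≤ t^(n-1) * D1 := by
      have h1 := growth (f := derivative p) one_pos ht1 hutn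
      rw [div_one] at h1
      refine le_trans h1 (mul_le_mul_of_nonneg_right ?_ hD1nn)
      refine pow_le_pow_right₀ ht1 ?_
      rw [← hdeg]
      exact natDegree_derivative_le p
    have heval : ‖(derivative Q).eval (t:ℂ)‖
        = (s:ℝ) * ‖p.eval (u * t)‖^(s-1) * ‖(derivative p).eval (u * t)‖ := by
      rw [hQ']
      simp only [eval_mul, eval_C, eval_pow, eval_comp, eval_X]
      rw [norm_mul, norm_mul, norm_mul, norm_pow, hqeval, hu, one_mul, Complex.norm_natCast]
    rw [heval]
    have h1 : ‖p.eval (u * t)‖^(s-1) ≤ (t^n * M1)^(s-1) :=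
      pow_le_pow_left₀ (norm_nonneg _) hbp _
    calc (s:ℝ) * ‖p.eval (u * t)‖^(s-1) * ‖(derivative p).eval (u * t)‖
        ≤ (s:ℝ) * (t^n * M1)^(s-1) * (t^(n-1) * D1) := by
          refine mul_le_mul ?_ hbp' (norm_nonneg _) (by positivity)
          exact mul_le_mul_of_nonneg_left h1 (by positivity)
      _ = Cb * t^(n*s-1) := by
          rw [hCb_def, mul_pow, ← pow_mul]
          have hexp : n * (s-1) + (n-1) = n*s - 1 := by
            obtain ⟨s', rfl⟩ : ∃ s', s = s' + 1 := ⟨s-1, by omega⟩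
            obtain ⟨n', rfl⟩ : ∃ n', n = n' + 1 := ⟨n-1, by omega⟩
            simp only [Nat.add_sub_cancel]
            rw [Nat.mul_succ]
            omega
          rw [← hexp, pow_add]
          ring
  -- FTC
  have hφ : ∀ t : ℝ, t ∈ Set.uIcc (1:ℝ) R →
      HasDerivAt (fun x : ℝ => Q.eval (x:ℂ)) ((derivative Q).eval (t:ℂ)) t :=
    fun t _ => (Q.hasDerivAt (t:ℂ)).comp_ofReal
  have hcont : Continuous fun t : ℝ => (derivative Q).eval (t:ℂ) :=
    ((derivative Q).continuous).comp Complex.continuous_ofReal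
  have hFTC : ∫ t in (1:ℝ)..R, (derivative Q).eval (t:ℂ)
      = Q.eval (R:ℂ) - Q.eval ((1:ℝ):ℂ) :=
    intervalIntegral.integral_eq_sub_of_hasDerivAt hφ (hcont.intervalIntegrable 1 R)
  -- integral bound
  have hcontg : Continuous fun t : ℝ => Cb * t^(n*s-1) := by continuity
  have hIb : ‖Q.eval (R:ℂ) - Q.eval ((1:ℝ):ℂ)‖ ≤ Cb * ((R^(n*s) - 1)/(n*s)) := by
    rw [← hFTC]
    have hns1 : (n*s - 1) + 1 = n*s := by
      have : 1 ≤ n*s := Nat.one_le_iff_ne_zero.mpr (by positivity)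
      omega
    calc ‖∫ t in (1:ℝ)..R, (derivative Q).eval (t:ℂ)‖
        ≤ ∫ t in (1:ℝ)..R, ‖(derivative Q).eval (t:ℂ)‖ :=
          intervalIntegral.norm_integral_le_integral_norm hR
      _ ≤ ∫ t in (1:ℝ)..R, Cb * t^(n*s-1) := by
          refine intervalIntegral.integral_mono_on hR
            (hcont.norm.intervalIntegrable 1 R) (hcontg.intervalIntegrable 1 R) hptw
      _ = Cb * ((R^(n*s) - 1)/(n*s)) := by
          rw [intervalIntegral.integral_const_mul, integral_pow]
          congr 1
          have hc : ((n*s-1:ℕ):ℝ) + 1 = (n:ℝ)*(s:ℝ) := by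
            rw [show ((n*s-1:ℕ):ℝ) + 1 = ((n*s-1+1 : ℕ):ℝ) by push_cast; ring, hns1]
            push_cast; ring
          rw [hc, hns1]
          norm_num
  -- assemble
  have hQR : ‖Q.eval (R:ℂ)‖ = (polyMax p R)^s := by
    rw [hQeval, huR, norm_pow, hz₀max]
  have hQ1 : ‖Q.eval ((1:ℝ):ℂ)‖ ≤ M1^s := by
    rw [hQeval, norm_pow]
    refine pow_le_pow_left₀ (norm_nonneg _) ?_ s
    refine le_polyMax ?_
    simpa using hut 1 one_pos.le
  have htri : (polyMax p R)^s ≤ M1^s + Cb * ((R^(n*s) - 1)/(n*s)) := by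
    calc (polyMax p R)^s = ‖Q.eval (R:ℂ)‖ := hQR.symm
      _ ≤ ‖Q.eval ((1:ℝ):ℂ)‖ + ‖Q.eval (R:ℂ) - Q.eval ((1:ℝ):ℂ)‖ := by
          have := norm_sub_norm_le (Q.eval (R:ℂ)) (Q.eval ((1:ℝ):ℂ))
          linarith [norm_sub_rev (Q.eval (R:ℂ)) (Q.eval ((1:ℝ):ℂ)) ▸ this]
      _ ≤ M1^s + Cb * ((R^(n*s) - 1)/(n*s)) := add_le_add hQ1 hIb
  -- numeric conclusion
  have hRns : 1 ≤ R^(n*s) := one_le_pow₀ hR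
  have hKm : (0:ℝ) < K^(n-1) * (1+K) := by positivity
  have hCbb : Cb * ((R^(n*s) - 1)/(n*s)) ≤ M1^s * ((R^(n*s) - 1)/(K^(n-1)*(1+K))) := by
    rw [hCb_def]
    have hDD : (s:ℝ) * M1^(s-1) * D1 * ((R^(n*s) - 1)/(n*s))
        ≤ (s:ℝ) * M1^(s-1) * (((n:ℝ)/(K^(n-1)*(1+K))) * M1) * ((R^(n*s) - 1)/(n*s)) := by
      refine mul_le_mul_of_nonneg_right (mul_le_mul_of_nonneg_left hD1 (by positivity)) ?_
      have hnspos : (0:ℝ) < ((n*s : ℕ):ℝ) := by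
        have h1 : 1 ≤ n*s := Nat.one_le_iff_ne_zero.mpr (by positivity)
        exact_mod_cast h1
      have hnspos' : (0:ℝ) < (n:ℝ)*(s:ℝ) := by push_cast at hnspos; linarith
      exact div_nonneg (by linarith) hnspos'.le
    refine le_trans hDD (le_of_eq ?_)
    have hns : ((n*s : ℕ):ℝ) = (n:ℝ) * (s:ℝ) := by push_cast; ring
    have hMs : M1^(s-1) * M1 = M1^s := by
      rw [← pow_succ]
      congr 1
      omega
    have hn0 : (n:ℝ) ≠ 0 := by positivity
    have hs0 : (s:ℝ) ≠ 0 := by positivity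
    field_simp [hns]
    ring_nf
    rw [← hMs]
    ring
  have hfinal : M1^s + M1^s * ((R^(n*s) - 1)/(K^(n-1)*(1+K)))
      = ((K ^ (n - 1) * (1 + K) + (R ^ (n * s) - 1)) / (K ^ (n - 1) + K ^ n)) * M1 ^ s := by
    have hden : K^(n-1) + K^n = K^(n-1)*(1+K) := by
      have hnn : n = (n-1) + 1 := by omega
      rw [hnn]
      simp only [Nat.add_sub_cancel]
      rw [pow_succ]
      ring
    rw [hden]
    field_simp
  calc (polyMax p R)^s ≤ M1^s + Cb * ((R^(n*s) - 1)/(n*s)) := htri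
    _ ≤ M1^s + M1^s * ((R^(n*s) - 1)/(K^(n-1)*(1+K))) := by linarith [hCbb]
    _ = _ := hfinal
end

section
/- Let p(z) be a polynomial of degree n having all its zeros on the circle |z| = K with 0 < K ≤ 1. Then for every R ≥ 1, max_{|z|=R} |p(z)| ≤ [(K^{n-1}(1+K) + (R^n − 1)) / (K^{n-1} + K^n)] · max_{|z|=1} |p(z)|. -/
open Polynomial Metric Complex intervalIntegral MeasureTheory



lemma polyMax_bddAbove (p : Polynomial ℂ) (r : ℝ) :
    BddAbove (Set.range fun z : Metric.sphere (0:ℂ) r => ‖p.eval (z : ℂ)‖) := by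
  have h := ((isCompact_sphere (0:ℂ) r).image_of_continuousOn
    ((p.continuous.norm).continuousOn)).bddAbove
  rwa [Set.image_eq_range] at h

lemma norm_eval_le_polyMax (p : Polynomial ℂ) {r : ℝ} {z : ℂ} (hz : ‖z‖ = r) :
    ‖p.eval z‖ ≤ polyMax p r := by
  have hz' : z ∈ Metric.sphere (0:ℂ) r := by simp [mem_sphere_iff_norm, hz]
  exact le_ciSup (polyMax_bddAbove p r) (⟨z, hz'⟩ : Metric.sphere (0:ℂ) r)

lemma polyMax_le (p : Polynomial ℂ) {r B : ℝ} (hr : 0 ≤ r)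
    (h : ∀ z : ℂ, ‖z‖ = r → ‖p.eval z‖ ≤ B) : polyMax p r ≤ B := by
  have hne : (Metric.sphere (0:ℂ) r).Nonempty := NormedSpace.sphere_nonempty.mpr hr
  haveI : Nonempty (Metric.sphere (0:ℂ) r) := hne.to_subtype
  exact ciSup_le fun z => h z (by simpa [mem_sphere_iff_norm] using z.2)

lemma polyMax_nonneg (p : Polynomial ℂ) {r : ℝ} (hr : 0 ≤ r) : 0 ≤ polyMax p r := by
  obtain ⟨z, hz⟩ : (Metric.sphere (0:ℂ) r).Nonempty := NormedSpace.sphere_nonempty.mpr hr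
  exact (norm_nonneg _).trans (norm_eval_le_polyMax p (by simpa [mem_sphere_iff_norm] using hz))

lemma reflect_eval (f : Polynomial ℂ) (m : ℕ) (hm : f.natDegree ≤ m) (a : ℝ) {w : ℂ}
    (hw : w ≠ 0) :
    (∑ k ∈ Finset.range (m+1), C (f.coeff k * (a:ℂ)^(2*k)) * X^(m-k)).eval w
      = w^m * f.eval (((a:ℂ)^2)/w) := by
  rw [eval_finset_sum]
  rw [f.eval_eq_sum_range' (Nat.lt_succ_of_le hm), Finset.mul_sum]
  refine Finset.sum_congr rfl fun k hk => ?_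
  have hk' : k ≤ m := Nat.lt_succ_iff.mp (Finset.mem_range.mp hk)
  simp only [eval_mul, eval_C, eval_pow, eval_X]
  have h1 : (a:ℂ)^(2*k) = ((a:ℂ)^2)^k := by rw [pow_mul]
  have h2 : w^(m-k) = w^m * (w^k)⁻¹ := by
    rw [eq_mul_inv_iff_mul_eq₀ (pow_ne_zero k hw), pow_sub_mul_pow _ hk']
  rw [h1, h2, div_pow, div_eq_mul_inv]
  ring

lemma growth (f : Polynomial ℂ) (m : ℕ) (hm : f.natDegree ≤ m) {a b : ℝ}
    (ha : 0 < a) (hab : a ≤ b) {z : ℂ} (hz : ‖z‖ = b) :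
    ‖f.eval z‖ ≤ (b/a)^m * polyMax f a := by
  have hb : 0 < b := ha.trans_le hab
  have hzne : z ≠ 0 := by
    intro h; rw [h, norm_zero] at hz; exact hb.ne hz
  set g : Polynomial ℂ := ∑ k ∈ Finset.range (m+1), C (f.coeff k * (a:ℂ)^(2*k)) * X^(m-k)
    with hg
  -- max modulus for g on closed ball a
  have hmm : ∀ w : ℂ, ‖w‖ ≤ a → ‖g.eval w‖ ≤ a^m * polyMax f a := by
    intro w hwa
    have hfr : ∀ v ∈ frontier (Metric.ball (0:ℂ) a), ‖g.eval v‖ ≤ a^m * polyMax f a := by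
      intro v hv
      rw [frontier_ball (0:ℂ) ha.ne'] at hv
      have hv' : ‖v‖ = a := by simpa [mem_sphere_iff_norm] using hv
      have hvne : v ≠ 0 := by intro h; rw [h, norm_zero] at hv'; exact ha.ne hv'
      rw [reflect_eval f m hm a hvne, norm_mul, norm_pow, hv']
      have : ‖((a:ℂ)^2)/v‖ = a := by
        rw [norm_div, norm_pow, Complex.norm_real, Real.norm_of_nonneg ha.le, hv', sq,
          mul_div_assoc, div_self ha.ne', mul_one]
      exact mul_le_mul_of_nonneg_left (norm_eval_le_polyMax f this) (pow_nonneg ha.le m)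
    have hcl : w ∈ closure (Metric.ball (0:ℂ) a) := by
      rw [closure_ball (0:ℂ) ha.ne']
      simpa [mem_closedBall_iff_norm] using hwa
    exact Complex.norm_le_of_forall_mem_frontier_norm_le isBounded_ball
      (g.differentiable.diffContOnCl) hfr hcl
  -- apply at w = a^2/z
  have hw : ‖((a:ℂ)^2)/z‖ = a^2/b := by
    rw [norm_div, norm_pow, Complex.norm_real, Real.norm_of_nonneg ha.le, hz]
  have hwne : ((a:ℂ)^2)/z ≠ 0 := by
    apply div_ne_zero _ hzne
    exact pow_ne_zero 2 (by exact_mod_cast ha.ne')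
  have hle : a^2/b ≤ a := by
    rw [div_le_iff₀ hb]; nlinarith
  have key := hmm _ (le_of_eq_of_le hw hle)
  have hev : g.eval (((a:ℂ)^2)/z) = (((a:ℂ)^2)/z)^m * f.eval z := by
    rw [reflect_eval f m hm a hwne]
    have h2 : ((a:ℂ)^2)/(((a:ℂ)^2)/z) = z := by
      rw [div_div_eq_mul_div, mul_comm, mul_div_assoc,
        div_self (pow_ne_zero 2 (by exact_mod_cast ha.ne' : (a:ℂ) ≠ 0)), mul_one]
    rw [h2]
  rw [hev, norm_mul, norm_pow, hw] at key
  have hpos : 0 < (a^2/b)^m := pow_pos (div_pos (pow_pos ha 2) hb) m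
  rw [← le_div_iff₀' hpos] at key
  calc ‖f.eval z‖ ≤ a^m * polyMax f a / (a^2/b)^m := key
    _ = (b/a)^m * polyMax f a := by
        rw [div_pow, div_div_eq_mul_div, div_pow]
        field_simp
        ring

lemma derivEval (s : Multiset ℂ) (c : ℂ) {w : ℂ} (hw : ∀ r ∈ s, w ≠ r) :
    (Polynomial.derivative (C c * (s.map (fun r => X - C r)).prod)).eval w
      = (C c * (s.map (fun r => X - C r)).prod).eval w
          * ((s.map (fun r => (w - r)⁻¹)).sum) := by
  induction s using Multiset.induction_on with
  | empty => simp
  | cons a s ih =>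
      have ha : w ≠ a := hw a (Multiset.mem_cons_self a s)
      have ha' : w - a ≠ 0 := sub_ne_zero_of_ne ha
      have ih' := ih (fun r hr => hw r (Multiset.mem_cons_of_mem hr))
      simp only [Multiset.map_cons, Multiset.prod_cons, Multiset.sum_cons]
      have hre : C c * ((X - C a) * (Multiset.map (fun r => X - C r) s).prod)
          = (X - C a) * (C c * (Multiset.map (fun r => X - C r) s).prod) := by ring
      rw [hre, derivative_mul]
      simp only [eval_add, eval_mul, eval_sub, eval_X, eval_C, derivative_sub,
        derivative_X, derivative_C, sub_zero, eval_one]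
      rw [ih']
      simp only [eval_mul, eval_C]
      field_simp

lemma logDeriv' (f : Polynomial ℂ) {w : ℂ} (hf : f.eval w ≠ 0) :
    f.derivative.eval w = f.eval w * ((f.roots.map (fun r => (w - r)⁻¹)).sum) := by
  have hf0 : f ≠ 0 := fun h => hf (by simp [h])
  have he := (IsAlgClosed.splits f).eq_prod_roots
  have hw : ∀ r ∈ f.roots, w ≠ r := by
    intro r hr h
    exact hf (h ▸ (isRoot_of_mem_roots hr))
  have h := derivEval f.roots f.leadingCoeff hw
  rw [← he] at h
  exact h

lemma re_half {w u : ℂ} (hw : ‖w‖ = 1) (hu : ‖u‖ ≤ 1) (hne : u ≠ w) :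
    (1:ℝ)/2 ≤ (w / (w - u)).re := by
  have hd : w - u ≠ 0 := sub_ne_zero_of_ne (Ne.symm hne)
  have hnsq : (0:ℝ) < normSq (w - u) := normSq_pos.mpr hd
  have hw2 : w.re * w.re + w.im * w.im = 1 := by
    have h1 : normSq w = 1 := by
      rw [Complex.normSq_eq_norm_sq, hw]; norm_num
    rwa [normSq_apply] at h1
  have hu2 : u.re * u.re + u.im * u.im ≤ 1 := by
    have h1 : normSq u ≤ 1 := by
      rw [Complex.normSq_eq_norm_sq]
      nlinarith [norm_nonneg u]
    rwa [normSq_apply] at h1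
  rw [div_re, ← add_div, le_div_iff₀ hnsq]
  simp only [normSq_apply, sub_re, sub_im]
  nlinarith [hw2, hu2]

lemma norm_sub_nat_le {S : ℂ} {n : ℕ} (h : (n:ℝ)/2 ≤ S.re) : ‖S - (n:ℂ)‖ ≤ ‖S‖ := by
  have h1 : normSq (S - (n:ℂ)) ≤ normSq S := by
    simp only [normSq_apply, sub_re, sub_im, natCast_re, natCast_im, sub_zero]
    nlinarith [h]
  have := Real.sqrt_le_sqrt h1
  rwa [← Complex.norm_def, ← Complex.norm_def] at this

lemma norm_le_of_normSq_le {a b : ℂ} {c : ℝ} (hc : 0 ≤ c)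
    (h : normSq a ≤ c^2 * normSq b) : ‖a‖ ≤ c * ‖b‖ := by
  have := Real.sqrt_le_sqrt h
  rwa [Real.sqrt_mul (sq_nonneg c), Real.sqrt_sq hc, ← Complex.norm_def, ← Complex.norm_def] at this

-- number of roots
lemma card_roots_alg (f : Polynomial ℂ) (hf : f ≠ 0) :
    Multiset.card f.roots = f.natDegree :=
  splits_iff_card_roots.mp (IsAlgClosed.splits f)

lemma multiset_re_sum (s : Multiset ℂ) : s.sum.re = (s.map Complex.re).sum := by
  induction s using Multiset.induction_on with
  | empty => simp
  | cons a s ih => simp [ih]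

-- key sum T and the bridging identities
lemma wT_eq (f : Polynomial ℂ) {w : ℂ} (hf : f.eval w ≠ 0) :
    w * f.derivative.eval w
      = f.eval w * ((f.roots.map (fun r => w / (w - r))).sum) := by
  rw [logDeriv' f hf]
  simp only [div_eq_mul_inv]
  rw [Multiset.sum_map_mul_left]
  ring

-- Lemma L: all roots in closed unit disk
lemma lemmaL (F : Polynomial ℂ) {n : ℕ} (hdeg : F.natDegree = n)
    (hroots : ∀ u : ℂ, F.eval u = 0 → ‖u‖ < 1) {w : ℂ} (hw : ‖w‖ = 1)
    (hFw : F.eval w ≠ 0) :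
    ‖(n:ℂ) * F.eval w - w * F.derivative.eval w‖ ≤ ‖F.derivative.eval w‖ := by
  have hF0 : F ≠ 0 := fun h => hFw (by simp [h])
  set T : ℂ := (F.roots.map (fun r => w / (w - r))).sum with hT
  have hwT : w * F.derivative.eval w = F.eval w * T := wT_eq F hFw
  have hTre : (n:ℝ)/2 ≤ T.re := by
    have hre : T.re = ((F.roots.map (fun r => (w / (w - r)).re)).sum) := by
      rw [hT, multiset_re_sum, Multiset.map_map]
      rfl
    rw [hre]
    have hcard : Multiset.card (F.roots.map (fun r => (w / (w - r)).re)) = n := by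
      rw [Multiset.card_map, card_roots_alg F hF0, hdeg]
    have hle : ∀ x ∈ F.roots.map (fun r => (w / (w - r)).re), (1:ℝ)/2 ≤ x := by
      intro x hx
      obtain ⟨r, hr, rfl⟩ := Multiset.mem_map.mp hx
      have hru : ‖r‖ < 1 := hroots r (isRoot_of_mem_roots hr)
      have hrw : r ≠ w := fun h => (by rw [h, hw] at hru; exact lt_irrefl 1 hru)
      exact re_half hw hru.le hrw
    have := Multiset.card_nsmul_le_sum hle
    rw [hcard] at this
    calc (n:ℝ)/2 = n • ((1:ℝ)/2) := by
          simp [nsmul_eq_mul]; ring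
      _ ≤ _ := this
  have hnT : (n:ℂ) * F.eval w - w * F.derivative.eval w = F.eval w * ((n:ℂ) - T) := by
    rw [hwT]; ring
  rw [hnT, norm_mul]
  calc ‖F.eval w‖ * ‖(n:ℂ) - T‖ ≤ ‖F.eval w‖ * ‖T‖ := by
        apply mul_le_mul_of_nonneg_left _ (norm_nonneg _)
        rw [norm_sub_rev]
        exact norm_sub_nat_le hTre
    _ = ‖F.eval w * T‖ := (norm_mul _ _).symm
    _ = ‖w * F.derivative.eval w‖ := by rw [hwT]
    _ = ‖F.derivative.eval w‖ := by rw [norm_mul, hw, one_mul]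

lemma multiset_sum_one_sub (s : Multiset ℂ) (f : ℂ → ℂ) :
    (s.map (fun r => 1 - f r)).sum = (Multiset.card s : ℂ) - (s.map f).sum := by
  induction s using Multiset.induction_on with
  | empty => simp
  | cons a s ih => simp only [Multiset.map_cons, Multiset.sum_cons, ih, Multiset.card_cons]
                   push_cast; ring

lemma conj_div_circle {w r : ℂ} (hw : ‖w‖ = 1) (hr : ‖r‖ = 1) (hne : r ≠ w) :
    (starRingEnd ℂ) (w / (w - r)) = 1 - w / (w - r) := by
  have hw0 : w ≠ 0 := by intro h; rw [h, norm_zero] at hw; norm_num at hw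
  have hr0 : r ≠ 0 := by intro h; rw [h, norm_zero] at hr; norm_num at hr
  have hwr : w - r ≠ 0 := sub_ne_zero_of_ne (Ne.symm hne)
  rw [map_div₀, map_sub, ← Complex.inv_eq_conj hw, ← Complex.inv_eq_conj hr]
  have h2 : w⁻¹ - r⁻¹ = (r - w) / (w * r) := by field_simp
  rw [h2]
  have hrw : r - w ≠ 0 := sub_ne_zero_of_ne hne
  field_simp
  ring

lemma claimA (P : Polynomial ℂ) {n : ℕ} (hdeg : P.natDegree = n)
    (hroots : ∀ u : ℂ, P.eval u = 0 → ‖u‖ = 1) {w : ℂ} (hw : ‖w‖ = 1) :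
    ‖(n:ℂ) * P.eval w - w * P.derivative.eval w‖ = ‖P.derivative.eval w‖ := by
  by_cases hPw : P.eval w = 0
  · rw [hPw, mul_zero, zero_sub, norm_neg, norm_mul, hw, one_mul]
  · have hP0 : P ≠ 0 := fun h => hPw (by simp [h])
    set T : ℂ := (P.roots.map (fun r => w / (w - r))).sum with hT
    have hwT : w * P.derivative.eval w = P.eval w * T := wT_eq P hPw
    have hconj : (starRingEnd ℂ) T = (n:ℂ) - T := by
      rw [hT, map_multiset_sum, Multiset.map_map]
      have hmc : Multiset.map ((starRingEnd ℂ) ∘ fun r => w / (w - r)) P.roots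
          = Multiset.map (fun r => 1 - w / (w - r)) P.roots := by
        apply Multiset.map_congr rfl
        intro r hr
        have hr1 : ‖r‖ = 1 := hroots r (isRoot_of_mem_roots hr)
        have hrw : r ≠ w := fun h => hPw (by rw [← h]; exact isRoot_of_mem_roots hr)
        exact conj_div_circle hw hr1 hrw
      rw [hmc, multiset_sum_one_sub, card_roots_alg P hP0, hdeg]
    have hnormT : ‖(n:ℂ) - T‖ = ‖T‖ := by
      rw [← hconj, RCLike.norm_conj]
    have hnT : (n:ℂ) * P.eval w - w * P.derivative.eval w = P.eval w * ((n:ℂ) - T) := by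
      rw [hwT]; ring
    rw [hnT, norm_mul, hnormT, ← norm_mul, ← hwT, norm_mul, hw, one_mul]

lemma center_le_polyMax (p : Polynomial ℂ) {r : ℝ} (hr : 0 < r) :
    ‖p.eval 0‖ ≤ polyMax p r := by
  have hfr : ∀ v ∈ frontier (Metric.ball (0:ℂ) r), ‖p.eval v‖ ≤ polyMax p r := by
    intro v hv
    rw [frontier_ball (0:ℂ) hr.ne'] at hv
    exact norm_eval_le_polyMax p (by simpa [mem_sphere_iff_norm] using hv)
  have hcl : (0:ℂ) ∈ closure (Metric.ball (0:ℂ) r) := by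
    rw [closure_ball (0:ℂ) hr.ne']
    simpa using hr.le
  exact Complex.norm_le_of_forall_mem_frontier_norm_le isBounded_ball
    (p.differentiable.diffContOnCl) hfr hcl

lemma multiset_norm_prod (s : Multiset ℂ) : ‖s.prod‖ = (s.map (fun z => ‖z‖)).prod := by
  induction s using Multiset.induction_on with
  | empty => simp
  | cons a s ih => simp [norm_mul, ih]

lemma norm_eval_zero_eq_lc (P : Polynomial ℂ) (hP : P ≠ 0)
    (hroots : ∀ u : ℂ, P.eval u = 0 → ‖u‖ = 1) :
    ‖P.eval 0‖ = ‖P.leadingCoeff‖ := by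
  have he := (IsAlgClosed.splits P).eq_prod_roots
  conv_lhs => rw [he]
  rw [eval_mul, eval_C, eval_multiset_prod, Multiset.map_map, norm_mul, multiset_norm_prod,
    Multiset.map_map]
  have : ∀ x ∈ Multiset.map ((fun z => ‖z‖) ∘ eval 0 ∘ fun a => X - C a) P.roots, x = 1 := by
    intro x hx
    obtain ⟨r, hr, rfl⟩ := Multiset.mem_map.mp hx
    simp only [Function.comp_apply, eval_sub, eval_X, eval_C, zero_sub, norm_neg]
    exact hroots r (isRoot_of_mem_roots hr)
  rw [Multiset.prod_eq_one this, mul_one]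

lemma propS (P : Polynomial ℂ) {n : ℕ} (hn : 1 ≤ n) (hdeg : P.natDegree = n)
    (hroots : ∀ u : ℂ, P.eval u = 0 → ‖u‖ = 1) {w : ℂ} (hw : ‖w‖ = 1) :
    ‖P.derivative.eval w‖ ≤ (n:ℝ)/2 * polyMax P 1 := by
  set M : ℝ := polyMax P 1 with hM
  have hP0 : P ≠ 0 := by
    intro h; rw [h, natDegree_zero] at hdeg; omega
  have hne0 : P.eval 0 ≠ 0 := by
    intro h; have := hroots 0 h; simp at this
  have hMpos : 0 < M := lt_of_lt_of_le (norm_pos_iff.mpr hne0) (center_le_polyMax P one_pos)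
  have hlcM : ‖P.coeff n‖ ≤ M := by
    have h1 : P.coeff n = P.leadingCoeff := by rw [← hdeg]; rfl
    rw [h1, ← norm_eval_zero_eq_lc P hP0 hroots]
    exact center_le_polyMax P one_pos
  have hw0 : w ≠ 0 := by intro h; rw [h, norm_zero] at hw; norm_num at hw
  have hwp : ‖w ^ (n-1)‖ = 1 := by rw [norm_pow, hw, one_pow]
  have hwp0 : w ^ (n-1) ≠ 0 := pow_ne_zero _ hw0
  by_contra hcon
  push_neg at hcon
  set A : ℂ := P.derivative.eval w with hA
  set D : ℝ := ‖A‖ with hD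
  have hDpos : 0 < D := by
    have : (0:ℝ) < (n:ℝ)/2 * M := by
      apply mul_pos _ hMpos
      have : (1:ℝ) ≤ (n:ℝ) := by exact_mod_cast hn
      linarith
    exact this.trans hcon
  have hA0 : A ≠ 0 := norm_pos_iff.mp hDpos
  have hnM : 0 < (n:ℝ) * M := by
    apply mul_pos _ hMpos
    exact_mod_cast hn
  set e : ℝ := 1 + (2*D - (n:ℝ)*M)/(2*(n:ℝ)*M) with he
  have he1 : 1 < e := by
    rw [he]
    have : 0 < (2*D - (n:ℝ)*M)/(2*(n:ℝ)*M) := by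
      apply div_pos _ (by linarith)
      linarith
    linarith
  have hr : e * ((n:ℝ)*M) = D + (n:ℝ)*M/2 := by
    rw [he]; field_simp; ring
  set lam : ℂ := -((e:ℂ) * A) / ((D:ℂ) * w^(n-1)) with hlam
  have hDC : ((D:ℝ):ℂ) ≠ 0 := by exact_mod_cast hDpos.ne'
  have hlamnorm : ‖lam‖ = e := by
    rw [hlam, norm_div, norm_neg, norm_mul, norm_mul, hwp, Complex.norm_real,
      Complex.norm_real, Real.norm_of_nonneg hDpos.le, Real.norm_of_nonneg (by linarith),
      mul_one, ← hD]
    field_simp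
  -- the auxiliary polynomial F
  set F : Polynomial ℂ := P + C (lam * (M:ℝ)) * X^n with hF
  have hevalF : ∀ u : ℂ, F.eval u = P.eval u + lam * (M:ℝ) * u^n := by
    intro u; rw [hF]; simp [eval_add, eval_mul, eval_pow]
  have hFu : ∀ u : ℂ, 1 ≤ ‖u‖ → F.eval u ≠ 0 := by
    intro u hu h0
    have hPu : ‖P.eval u‖ ≤ ‖u‖^n * M := by
      have := growth P n hdeg.le one_pos hu rfl
      rwa [div_one] at this
    have hup : (1:ℝ) ≤ ‖u‖^n := one_le_pow₀ hu
    have h1 : P.eval u = -(lam * (M:ℝ) * u^n) := by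
      rw [hevalF] at h0; linear_combination h0
    have h2 : ‖P.eval u‖ = e * M * ‖u‖^n := by
      rw [h1, norm_neg, norm_mul, norm_mul, norm_pow, hlamnorm, Complex.norm_real,
        Real.norm_of_nonneg hMpos.le]
    have h3 : e * M * ‖u‖^n ≤ ‖u‖^n * M := h2 ▸ hPu
    have h4 : (0:ℝ) < (e - 1) * M * ‖u‖^n :=
      mul_pos (mul_pos (by linarith) hMpos) (by linarith)
    nlinarith [h3, h4]
  have hFroots : ∀ u : ℂ, F.eval u = 0 → ‖u‖ < 1 := by
    intro u h0
    by_contra h1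
    exact hFu u (le_of_not_gt h1) h0
  have hcoeffF : F.coeff n = P.coeff n + lam * (M:ℝ) := by
    rw [hF, coeff_add, coeff_C_mul, coeff_X_pow, if_pos rfl, mul_one]
  have hcoeffF0 : F.coeff n ≠ 0 := by
    rw [hcoeffF]
    intro h0
    have h1 : lam * (M:ℝ) = -(P.coeff n) := by linear_combination h0
    have h2 : ‖lam * (M:ℝ)‖ = e * M := by
      rw [norm_mul, hlamnorm, Complex.norm_real, Real.norm_of_nonneg hMpos.le]
    rw [h1, norm_neg] at h2
    nlinarith [hlcM, hMpos, he1]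
  have hdegF : F.natDegree = n := by
    apply le_antisymm
    · rw [hF]
      apply (natDegree_add_le _ _).trans
      apply max_le (le_of_eq hdeg)
      exact (natDegree_C_mul_le _ _).trans (le_of_eq (natDegree_X_pow n))
    · exact le_natDegree_of_ne_zero hcoeffF0
  have hFw : F.eval w ≠ 0 := hFu w (le_of_eq hw.symm)
  have hL := lemmaL F hdegF hFroots hw hFw
  -- compute the two sides
  have hderF : F.derivative.eval w = A + lam * (M:ℝ) * ((n:ℂ) * w^(n-1)) := by
    rw [hF, derivative_add, derivative_C_mul, derivative_X_pow]
    simp only [eval_add, eval_mul, eval_C, eval_pow, eval_X, hA]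
  have hwn : w * w^(n-1) = w^n := by
    have h' : (n-1)+1 = n := by omega
    calc w * w^(n-1) = w^((n-1)+1) := (pow_succ' w (n-1)).symm
      _ = w^n := by rw [h']
  have hLHS : (n:ℂ) * F.eval w - w * F.derivative.eval w
      = (n:ℂ) * P.eval w - w * A := by
    rw [hevalF, hderF]
    have : w * (lam * (M:ℝ) * ((n:ℂ) * w^(n-1))) = (n:ℂ) * (lam * (M:ℝ) * w^n) := by
      rw [← hwn]; ring
    rw [mul_add, mul_add, this]; ring
  have hclaim := claimA P hdeg hroots hw
  rw [← hA] at hclaim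
  rw [hLHS, hclaim, ← hD] at hL
  -- compute the RHS norm
  have hkey : A + lam * (M:ℝ) * ((n:ℂ) * w^(n-1)) = ((1 - (n:ℝ)*M*e/D : ℝ) : ℂ) * A := by
    rw [hlam]
    push_cast
    field_simp
    ring
  rw [hderF, hkey, norm_mul, Complex.norm_real, Real.norm_eq_abs, ← hD] at hL
  have habs : |1 - (n:ℝ)*M*e/D| = (n:ℝ)*M/(2*D) := by
    have h1 : 1 - (n:ℝ)*M*e/D = -((n:ℝ)*M/(2*D)) := by
      have h0 : (n:ℝ)*M*e = D + (n:ℝ)*M/2 := by linarith [hr]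
      rw [h0]
      field_simp
      ring
    rw [h1, abs_neg, abs_of_pos (by positivity)]
  rw [habs] at hL
  have : D ≤ (n:ℝ)*M/2 := by
    calc D ≤ (n:ℝ)*M/(2*D) * D := hL
      _ = (n:ℝ)*M/2 := by field_simp
  linarith [hcon]

lemma facBound {K : ℝ} (hK0 : 0 < K) (hK1 : K ≤ 1) {w r : ℂ} (hw : ‖w‖ = 1)
    (hr : ‖r‖ = K) : ‖(K:ℂ)*w - r‖ ≤ (2*K/(1+K)) * ‖w - r‖ := by
  have hc : (0:ℝ) ≤ 2*K/(1+K) := by positivity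
  apply norm_le_of_normSq_le hc
  have ht : |(w * (starRingEnd ℂ) r).re| ≤ K := by
    calc |(w * (starRingEnd ℂ) r).re| ≤ ‖w * (starRingEnd ℂ) r‖ :=
          Complex.abs_re_le_norm _
      _ = K := by
          rw [norm_mul, hw, RCLike.norm_conj, hr, one_mul]
  set t : ℝ := (w * (starRingEnd ℂ) r).re with hts
  have hnsq : ∀ (z : ℂ) (s : ℝ), ‖z‖ = s → normSq z = s^2 := by
    intro z s hz
    rw [Complex.normSq_eq_norm_sq, hz]
  have h1 : normSq ((K:ℂ)*w - r) = K^2 + K^2 - 2*(K*t) := by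
    rw [normSq_sub]
    have e1 : normSq ((K:ℂ)*w) = K^2 := by
      apply hnsq
      rw [norm_mul, Complex.norm_real, Real.norm_of_nonneg hK0.le, hw, mul_one]
    have e2 : (((K:ℂ)*w) * (starRingEnd ℂ) r).re = K * t := by
      rw [hts, mul_assoc, Complex.re_ofReal_mul]
    rw [e1, e2, hnsq r K hr]
  have h2 : normSq (w - r) = 1 + K^2 - 2*t := by
    rw [normSq_sub]
    have e1 : normSq w = 1 := by
      rw [hnsq w 1 hw]; norm_num
    rw [e1, hnsq r K hr, hts]
  rw [h1, h2, div_pow, div_mul_eq_mul_div, le_div_iff₀ (by positivity : (0:ℝ) < (1+K)^2)]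
  have hkey : (0:ℝ) ≤ 2*K*(1-K)^2*(K+t) := by
    apply mul_nonneg (by nlinarith [sq_nonneg (1-K)])
    have := abs_le.mp ht
    linarith [this.1]
  nlinarith [hkey]

lemma prodBound (s : Multiset ℂ) (g h : ℂ → ℂ) (c : ℝ) (hc : 0 ≤ c)
    (hb : ∀ r ∈ s, ‖g r‖ ≤ c * ‖h r‖) :
    ‖(s.map g).prod‖ ≤ c^(Multiset.card s) * ‖(s.map h).prod‖ := by
  induction s using Multiset.induction_on with
  | empty => simp
  | cons a s ih =>
      simp only [Multiset.map_cons, Multiset.prod_cons, Multiset.card_cons, norm_mul]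
      have ih' := ih (fun r hr => hb r (Multiset.mem_cons_of_mem hr))
      have hba := hb a (Multiset.mem_cons_self a s)
      calc ‖g a‖ * ‖(s.map g).prod‖ ≤ (c * ‖h a‖) * (c^(Multiset.card s) * ‖(s.map h).prod‖) :=
            mul_le_mul hba ih' (norm_nonneg _) (by positivity)
        _ = c^(Multiset.card s + 1) * (‖h a‖ * ‖(s.map h).prod‖) := by ring

lemma eval_prod_form (p : Polynomial ℂ) (x : ℂ) :
    p.eval x = p.leadingCoeff * ((p.roots.map (fun a => x - a)).prod) := by
  conv_lhs => rw [(IsAlgClosed.splits p).eq_prod_roots]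
  rw [eval_mul, eval_C, eval_multiset_prod, Multiset.map_map]
  refine congrArg _ (congrArg _ (Multiset.map_congr rfl ?_))
  intro a _
  simp

section main
variable (p : Polynomial ℂ) (n : ℕ) (hn : 1 ≤ n) (hdeg : p.natDegree = n)
  (K : ℝ) (hK0 : 0 < K) (hK1 : K ≤ 1)
  (hroots : ∀ z : ℂ, p.eval z = 0 → ‖z‖ = K)

include hn hdeg hK0 hK1 hroots

lemma shrinkMax : polyMax p K ≤ (2*K/(1+K)) * polyMax p 1 := by
  have hp0 : p ≠ 0 := by intro h; rw [h, natDegree_zero] at hdeg; omega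
  have hc : (0:ℝ) ≤ 2*K/(1+K) := by positivity
  apply polyMax_le p hK0.le
  intro z hz
  set w : ℂ := ((K:ℝ):ℂ)⁻¹ * z with hwdef
  have hKC : ((K:ℝ):ℂ) ≠ 0 := by exact_mod_cast hK0.ne'
  have hw : ‖w‖ = 1 := by
    rw [hwdef, norm_mul, norm_inv, Complex.norm_real, Real.norm_of_nonneg hK0.le, hz]
    field_simp
  have hzw : ((K:ℝ):ℂ) * w = z := by
    rw [hwdef, ← mul_assoc, mul_inv_cancel₀ hKC, one_mul]
  -- pointwise inequality
  have hpt : ‖p.eval (((K:ℝ):ℂ) * w)‖ ≤ (2*K/(1+K)) * ‖p.eval w‖ := by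
    rw [eval_prod_form p (((K:ℝ):ℂ) * w), eval_prod_form p w, norm_mul, norm_mul]
    have hprod := prodBound p.roots (fun a => ((K:ℝ):ℂ)*w - a) (fun a => w - a)
      (2*K/(1+K)) hc (fun r hr => facBound hK0 hK1 hw (hroots r (isRoot_of_mem_roots hr)))
    rw [card_roots_alg p hp0, hdeg] at hprod
    have hcn : (2*K/(1+K))^n ≤ 2*K/(1+K) := by
      calc (2*K/(1+K))^n ≤ (2*K/(1+K))^1 :=
            pow_le_pow_of_le_one hc (by rw [div_le_one (by linarith)]; linarith) hn
        _ = 2*K/(1+K) := pow_one _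
    calc ‖p.leadingCoeff‖ * ‖(p.roots.map (fun a => ((K:ℝ):ℂ)*w - a)).prod‖
        ≤ ‖p.leadingCoeff‖ * ((2*K/(1+K))^n * ‖(p.roots.map (fun a => w - a)).prod‖) :=
          mul_le_mul_of_nonneg_left hprod (norm_nonneg _)
      _ ≤ ‖p.leadingCoeff‖ * ((2*K/(1+K)) * ‖(p.roots.map (fun a => w - a)).prod‖) := by
          apply mul_le_mul_of_nonneg_left _ (norm_nonneg _)
          exact mul_le_mul_of_nonneg_right hcn (norm_nonneg _)
      _ = 2*K/(1+K) * (‖p.leadingCoeff‖ * ‖(p.roots.map (fun a => w - a)).prod‖) := by ring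
  rw [hzw] at hpt
  calc ‖p.eval z‖ ≤ 2*K/(1+K) * ‖p.eval w‖ := hpt
    _ ≤ 2*K/(1+K) * polyMax p 1 :=
        mul_le_mul_of_nonneg_left (norm_eval_le_polyMax p hw) hc

lemma derivK : ∀ ζ : ℂ, ‖ζ‖ = K → ‖p.derivative.eval ζ‖ ≤ (n:ℝ)/(2*K) * polyMax p K := by
  intro ζ hζ
  have hKC : ((K:ℝ):ℂ) ≠ 0 := by exact_mod_cast hK0.ne'
  set P : Polynomial ℂ := p.comp (C ((K:ℝ):ℂ) * X) with hP
  have hPeval : ∀ u : ℂ, P.eval u = p.eval (((K:ℝ):ℂ) * u) := by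
    intro u; rw [hP, eval_comp, eval_mul, eval_C, eval_X]
  have hPdeg : P.natDegree = n := by
    rw [hP, natDegree_comp, natDegree_C_mul_X _ hKC, mul_one, hdeg]
  have hProots : ∀ u : ℂ, P.eval u = 0 → ‖u‖ = 1 := by
    intro u hu
    rw [hPeval] at hu
    have := hroots _ hu
    rw [norm_mul, Complex.norm_real, Real.norm_of_nonneg hK0.le] at this
    field_simp at this
    tauto
  have hPmax : polyMax P 1 ≤ polyMax p K := by
    apply polyMax_le P zero_le_one
    intro z hz
    rw [hPeval]
    apply norm_eval_le_polyMax p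
    rw [norm_mul, Complex.norm_real, Real.norm_of_nonneg hK0.le, hz, mul_one]
  have hPder : ∀ u : ℂ, P.derivative.eval u = ((K:ℝ):ℂ) * p.derivative.eval (((K:ℝ):ℂ) * u) := by
    intro u
    rw [hP, derivative_comp]
    rw [derivative_C_mul, derivative_X, mul_one]
    rw [eval_mul, eval_comp, eval_C, eval_mul, eval_C, eval_X]
  set u : ℂ := ((K:ℝ):ℂ)⁻¹ * ζ with hu
  have hu1 : ‖u‖ = 1 := by
    rw [hu, norm_mul, norm_inv, Complex.norm_real, Real.norm_of_nonneg hK0.le, hζ]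
    field_simp
  have hKu : ((K:ℝ):ℂ) * u = ζ := by rw [hu, ← mul_assoc, mul_inv_cancel₀ hKC, one_mul]
  have hS := propS P hn hPdeg hProots hu1
  rw [hPder, hKu, norm_mul, Complex.norm_real, Real.norm_of_nonneg hK0.le] at hS
  have h2 : (n:ℝ)/2 * polyMax P 1 ≤ (n:ℝ)/2 * polyMax p K :=
    mul_le_mul_of_nonneg_left hPmax (by positivity)
  have h3 : K * ‖p.derivative.eval ζ‖ ≤ (n:ℝ)/2 * polyMax p K := hS.trans h2
  rw [div_mul_eq_mul_div, le_div_iff₀ (by linarith : (0:ℝ) < 2*K)]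
  nlinarith [h3]

lemma derivBound : ∀ z : ℂ, ‖z‖ = 1 →
    ‖p.derivative.eval z‖ ≤ (n:ℝ)/(K^(n-1)*(1+K)) * polyMax p 1 := by
  intro z hz
  have hmd : p.derivative.natDegree ≤ n - 1 := by
    have := natDegree_derivative_le p
    omega
  have h1 : ‖p.derivative.eval z‖ ≤ (1/K)^(n-1) * polyMax p.derivative K :=
    growth p.derivative (n-1) hmd hK0 hK1 hz
  have h2 : polyMax p.derivative K ≤ (n:ℝ)/(2*K) * polyMax p K :=
    polyMax_le _ hK0.le (derivK p n hn hdeg K hK0 hK1 hroots)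
  have h3 : polyMax p K ≤ (2*K/(1+K)) * polyMax p 1 :=
    shrinkMax p n hn hdeg K hK0 hK1 hroots
  have hpow : (0:ℝ) < (1/K)^(n-1) := by positivity
  calc ‖p.derivative.eval z‖ ≤ (1/K)^(n-1) * polyMax p.derivative K := h1
    _ ≤ (1/K)^(n-1) * ((n:ℝ)/(2*K) * polyMax p K) :=
        mul_le_mul_of_nonneg_left h2 hpow.le
    _ ≤ (1/K)^(n-1) * ((n:ℝ)/(2*K) * ((2*K/(1+K)) * polyMax p 1)) := by
        apply mul_le_mul_of_nonneg_left _ hpow.le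
        exact mul_le_mul_of_nonneg_left h3 (by positivity)
    _ = (n:ℝ)/(K^(n-1)*(1+K)) * polyMax p 1 := by
        rw [one_div, inv_pow]
        field_simp

end main

theorem dewan_ahuja_s_one (p : Polynomial ℂ) (n : ℕ) (hn : 1 ≤ n)
    (hdeg : p.natDegree = n) (K : ℝ) (hK0 : 0 < K) (hK1 : K ≤ 1)
    (hroots : ∀ z : ℂ, p.eval z = 0 → ‖z‖ = K)
    (R : ℝ) (hR : 1 ≤ R) :
    polyMax p R ≤
      ((K ^ (n - 1) * (1 + K) + (R ^ n - 1)) / (K ^ (n - 1) + K ^ n)) *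
        polyMax p 1 := by
  have hR0 : (0:ℝ) < R := lt_of_lt_of_le one_pos hR
  set M : ℝ := polyMax p 1 with hM
  have hMnn : 0 ≤ M := polyMax_nonneg p zero_le_one
  set B : ℝ := (n:ℝ)/(K^(n-1)*(1+K)) * M with hB
  have hBnn : 0 ≤ B := by
    apply mul_nonneg _ hMnn
    positivity
  have hd' : polyMax p.derivative 1 ≤ B :=
    polyMax_le _ zero_le_one (derivBound p n hn hdeg K hK0 hK1 hroots)
  have hmd : p.derivative.natDegree ≤ n - 1 := by
    have := natDegree_derivative_le p
    omega
  have hRn : (1:ℝ) ≤ R^n := one_le_pow₀ hR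
  -- pointwise bound on the circle of radius R
  have hb : ∀ z : ℂ, ‖z‖ = R → ‖p.eval z‖ ≤ M + (R^n - 1)/n * B := by
    intro z hz
    have hRC : ((R:ℝ):ℂ) ≠ 0 := by exact_mod_cast hR0.ne'
    set u : ℂ := ((R:ℝ):ℂ)⁻¹ * z with hu
    have hu1 : ‖u‖ = 1 := by
      rw [hu, norm_mul, norm_inv, Complex.norm_real, Real.norm_of_nonneg hR0.le, hz]
      field_simp
    have hRu : ((R:ℝ):ℂ) * u = z := by rw [hu, ← mul_assoc, mul_inv_cancel₀ hRC, one_mul]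
    -- derivative along the ray
    have hder : ∀ t : ℝ, HasDerivAt (fun s : ℝ => p.eval ((s:ℂ) * u))
        (p.derivative.eval ((t:ℂ)*u) * u) t := by
      intro t
      have h3 : HasDerivAt (fun s : ℂ => s * u) u (t:ℂ) := by
        simpa using (hasDerivAt_id ((t:ℝ):ℂ)).mul_const u
      have h1 : HasDerivAt (fun s : ℂ => p.eval (s * u))
          (p.derivative.eval ((t:ℂ)*u) * u) (t:ℂ) :=
        by have := HasDerivAt.comp ((t:ℝ):ℂ) (p.hasDerivAt (((t:ℝ):ℂ)*u)) h3; exact this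
      exact h1.comp_ofReal
    have hcont : Continuous fun t : ℝ => p.derivative.eval ((t:ℂ)*u) * u :=
      (((p.derivative.continuous).comp (Complex.continuous_ofReal.mul continuous_const)).mul
        continuous_const)
    have hint : IntervalIntegrable (fun t : ℝ => p.derivative.eval ((t:ℂ)*u) * u)
        volume 1 R := hcont.intervalIntegrable _ _
    have heq : ∫ t in (1:ℝ)..R, p.derivative.eval ((t:ℂ)*u) * u
        = p.eval (((R:ℝ):ℂ) * u) - p.eval (((1:ℝ):ℂ) * u) :=
      intervalIntegral.integral_eq_sub_of_hasDerivAt (fun x _ => hder x) hint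
    -- bound the integrand
    have hae : ∀ᵐ (t : ℝ) ∂(volume.restrict (Set.uIoc (1:ℝ) R)),
        ‖p.derivative.eval ((t:ℂ)*u) * u‖ ≤ t^(n-1) * B := by
      filter_upwards [ae_restrict_mem measurableSet_uIoc] with t ht
      rw [Set.uIoc_of_le hR] at ht
      have ht1 : (1:ℝ) ≤ t := ht.1.le
      have htu : ‖(t:ℂ)*u‖ = t := by
        rw [norm_mul, Complex.norm_real, Real.norm_of_nonneg (by linarith), hu1, mul_one]
      have hg := growth p.derivative (n-1) hmd one_pos ht1 htu
      rw [div_one] at hg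
      rw [norm_mul, hu1, mul_one]
      calc ‖p.derivative.eval ((t:ℂ)*u)‖ ≤ t^(n-1) * polyMax p.derivative 1 := hg
        _ ≤ t^(n-1) * B := by
            apply mul_le_mul_of_nonneg_left hd' (by positivity)
    have hgint : IntervalIntegrable (fun t : ℝ => t^(n-1) * B) volume 1 R :=
      ((continuous_pow (n-1)).mul continuous_const).intervalIntegrable _ _
    have hnorm := intervalIntegral.norm_integral_le_abs_of_norm_le hae hgint
    have hgval : ∫ t in (1:ℝ)..R, t^(n-1) * B = (R^n - 1)/n * B := by
      rw [intervalIntegral.integral_mul_const, integral_pow]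
      have h1 : n - 1 + 1 = n := by omega
      rw [h1, one_pow]
      congr 1
      congr 1
      exact_mod_cast congrArg Nat.cast h1
    rw [heq, hgval] at hnorm
    have habs : |(R^n - 1)/n * B| = (R^n - 1)/n * B := by
      apply _root_.abs_of_nonneg
      apply mul_nonneg _ hBnn
      apply div_nonneg (by linarith)
      exact_mod_cast Nat.zero_le n
    rw [habs] at hnorm
    have h1u : ((1:ℝ):ℂ) * u = u := by rw [Complex.ofReal_one, one_mul]
    have hfinal : ‖p.eval z‖ ≤ ‖p.eval u‖ + (R^n - 1)/n * B := by
      calc ‖p.eval z‖ = ‖p.eval u + (p.eval (((R:ℝ):ℂ) * u) - p.eval (((1:ℝ):ℂ) * u))‖ := by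
            rw [h1u, hRu]; ring_nf
        _ ≤ ‖p.eval u‖ + ‖p.eval (((R:ℝ):ℂ) * u) - p.eval (((1:ℝ):ℂ) * u)‖ := norm_add_le _ _
        _ ≤ ‖p.eval u‖ + (R^n - 1)/n * B := by linarith [hnorm]
    calc ‖p.eval z‖ ≤ ‖p.eval u‖ + (R^n - 1)/n * B := hfinal
      _ ≤ M + (R^n - 1)/n * B := by linarith [norm_eval_le_polyMax p hu1]
  -- conclude
  have hle := polyMax_le p hR0.le hb
  have hdK : K^(n-1) + K^n = K^(n-1)*(1+K) := by
    have h1 : K^n = K^(n-1) * K := by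
      rw [← pow_succ]
      congr 1
      omega
    rw [h1]; ring
  have hneq : M + (R^n - 1)/n * B
      = ((K ^ (n - 1) * (1 + K) + (R ^ n - 1)) / (K ^ (n - 1) + K ^ n)) * M := by
    rw [hB, hdK]
    have hn0 : (n:ℝ) ≠ 0 := by
      have : (1:ℝ) ≤ (n:ℝ) := by exact_mod_cast hn
      linarith
    have hKd : K^(n-1)*(1+K) ≠ 0 := by positivity
    field_simp
  rw [← hneq]
  exact hle
end
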